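/- Let 1 ≤ k ≤ n and let R be a run of an n-DPDA that is not (k−1)-upper. Suppose the greatest index j ∈ [0,|R|−1] such that R[j,|R|] is k-upper exists and the prefix R[0,j] is (k−1)-upper. Then R is a k-return. -/

import Mathlib

namespace HOPDA

/-- Iterated exponentiation `pow` from the paper:
`pow [] = 1`, `pow (m :: l) = (1 + m) ^ pow l - 1`. -/
def pow : List ℕ → ℕ
  | [] => 1
  | m :: l => (1 + m) ^ pow l - 1

/-! ### Higher-order stacks.

Stacks are represented positionlessly (nested lists of symbols); the positions of the
paper are represented by *addresses*: lists of bottom-based indices leading from the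
outermost level into the stack.  Equality of contents is positionless equality `≅`. -/

inductive St (Γ : Type) : Type where
  | leaf (γ : Γ) : St Γ
  | node (l : List (St Γ)) : St Γ

/-- `IsValid k s` : `s` is a stack of order `k` all of whose component stacks are nonempty. -/
def IsValid {Γ : Type} : ℕ → St Γ → Prop
  | 0, St.leaf _ => True
  | 0, St.node _ => False
  | _ + 1, St.leaf _ => False
  | k + 1, St.node l => l ≠ [] ∧ ∀ t ∈ l, IsValid k t

/-- The address of the topmost substack `d` levels below the surface
(indices count from the bottom of each stack, as the positions in the paper do). -/
def topAddr {Γ : Type} : St Γ → ℕ → List ℕ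
  | _, 0 => []
  | St.leaf _, _ + 1 => []
  | St.node l, d + 1 => (l.length - 1) :: topAddr (l.getLastD (St.node [])) d

/-- The substack sitting at a given address. -/
def sub? {Γ : Type} : St Γ → List ℕ → Option (St Γ)
  | s, [] => some s
  | St.leaf _, _ :: _ => none
  | St.node l, i :: p =>
      match l[i]? with
      | some t => sub? t p
      | none => none

/-- Modify the substack at a given address. -/
def modAt {Γ : Type} : St Γ → List ℕ → (St Γ → Option (St Γ)) → Option (St Γ)
  | s, [], f => f s
  | St.leaf _, _ :: _, _ => none
  | St.node l, i :: p, f =>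
      match l[i]? with
      | none => none
      | some t =>
          match modAt t p f with
          | none => none
          | some t' => some (St.node (l.set i t'))

/-- The topmost stack symbol of an order-`n` stack. -/
def topLeaf? {Γ : Type} (n : ℕ) (s : St Γ) : Option Γ :=
  match sub? s (topAddr s n) with
  | some (St.leaf γ) => some γ
  | _ => none

/-- The content of the topmost `k`-stack of an order-`n` stack (`top^k`);
equality of these contents is positionless equality `≅` of topmost `k`-stacks. -/
def topStk {Γ : Type} (n : ℕ) (s : St Γ) (k : ℕ) : Option (St Γ) :=
  sub? s (topAddr s (n - k))

/-- Number of components of the (composite) stack at the given address. -/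
def sizeAt {Γ : Type} (s : St Γ) (p : List ℕ) : ℕ :=
  match sub? s p with
  | some (St.node l) => l.length
  | _ => 0

/-- Remove the topmost component of a composite stack
(defined only when it has at least two components). -/
def popStk {Γ : Type} : St Γ → Option (St Γ)
  | St.node l => if 2 ≤ l.length then some (St.node l.dropLast) else none
  | St.leaf _ => none

/-- Duplicate the topmost `(r-1)`-stack of an `r`-stack,
replacing the topmost symbol of the new copy by `γ`. -/
def dupTop {Γ : Type} (r : ℕ) (γ : Γ) : St Γ → Option (St Γ)
  | St.node l =>
      match l.getLast? with
      | none => none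
      | some t =>
          match modAt t (topAddr t (r - 1)) (fun u =>
            match u with
            | St.leaf _ => some (St.leaf γ)
            | St.node _ => none) with
          | none => none
          | some t' => some (St.node (l ++ [t']))
  | St.leaf _ => none

/-- `push^r_γ` on an order-`n` stack. -/
def pushOp {Γ : Type} (n r : ℕ) (γ : Γ) (s : St Γ) : Option (St Γ) :=
  modAt s (topAddr s (n - r)) (dupTop r γ)

/-- `pop^r` on an order-`n` stack. -/
def popOp {Γ : Type} (n r : ℕ) (s : St Γ) : Option (St Γ) :=
  modAt s (topAddr s (n - r)) popStk

/-- Stack operations of an order-`n` pushdown automaton. -/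
inductive Op (Γ : Type) where
  | pop (k : ℕ)
  | push (k : ℕ) (γ : Γ)

def applyOp {Γ : Type} (n : ℕ) : Op Γ → St Γ → Option (St Γ)
  | Op.pop k, s => if 1 ≤ k ∧ k ≤ n then popOp n k s else none
  | Op.push k γ, s => if 1 ≤ k ∧ k ≤ n then pushOp n k γ s else none

/-- The one-step history function on addresses: for the address of a substack of
`op(s)` it returns the address of the substack of `s` from which it originates. -/
def histStep {Γ : Type} (n : ℕ) : Op Γ → St Γ → List ℕ → List ℕ
  | Op.pop _, _, p => p
  | Op.push r _, s, p =>
      let m := n - r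
      let ta := topAddr s m
      let sz := sizeAt s ta
      if p.take (m + 1) = ta ++ [sz] then p.set m (sz - 1) else p

/-! ### Deterministic order-`n` pushdown automata -/

inductive Trans (A Γ Q : Type) where
  | read (f : A → Q)
  | op (q : Q) (o : Op Γ)

/-- A deterministic order-`n` pushdown automaton. -/
structure DPDA (n : ℕ) (A Γ : Type) where
  Q : Type
  finQ : Finite Q
  qI : Q
  γI : Γ
  F : Set Q
  δ : Q → Γ → Trans A Γ Q
  read_inj : ∀ q γ f, δ q γ = Trans.read f → Function.Injective f

/-- One step of an `n`-DPDA; the label records the letter read (if any). -/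
inductive Step {n : ℕ} {A Γ : Type} (D : DPDA n A Γ) :
    D.Q × St Γ → Option A → D.Q × St Γ → Prop where
  | read {q : D.Q} {s : St Γ} {γ : Γ} {f : A → D.Q} (a : A) :
      IsValid n s → topLeaf? n s = some γ → D.δ q γ = Trans.read f →
      Step D (q, s) (some a) (f a, s)
  | op {q : D.Q} {s s' : St Γ} {γ : Γ} {q' : D.Q} {o : Op Γ} :
      IsValid n s → topLeaf? n s = some γ → D.δ q γ = Trans.op q' o →
      applyOp n o s = some s' →
      Step D (q, s) none (q', s')

/-- A (finite) run `R(0), …, R(len)` of an `n`-DPDA. -/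
structure Run {n : ℕ} {A Γ : Type} (D : DPDA n A Γ) where
  len : ℕ
  cfg : ℕ → D.Q × St Γ
  lab : ℕ → Option A
  ok : ∀ i < len, Step D (cfg i) (lab i) (cfg (i + 1))

namespace Run

variable {n : ℕ} {A Γ : Type} {D : DPDA n A Γ}

/-- The word read by a run. -/
def word (R : Run D) : List A := (List.range R.len).filterMap R.lab

/-- The subrun `R[i,j]`. -/
def sub (R : Run D) (i j : ℕ) : Run D where
  len := min j R.len - i
  cfg := fun t => R.cfg (i + t)
  lab := fun t => R.lab (i + t)
  ok := fun t ht => R.ok (i + t) (by omega)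

/-- The history function of the single step starting at position `j` of the run. -/
def stepHist (R : Run D) (j : ℕ) : List ℕ → List ℕ :=
  match topLeaf? n (R.cfg j).2 with
  | none => id
  | some γ =>
      match D.δ (R.cfg j).1 γ with
      | Trans.read _ => id
      | Trans.op _ o => histStep n o (R.cfg j).2

/-- `histTo R i j p` : the address in `R(i)` of the origin (history) of the substack
of `R(j)` sitting at address `p` (meaningful for `i ≤ j ≤ R.len`). -/
def histTo (R : Run D) (i : ℕ) : ℕ → List ℕ → List ℕ
  | 0, p => p
  | j + 1, p => if j + 1 ≤ i then p else histTo R i j (stepHist R j p)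

/-- A run is `k`-upper when the topmost `k`-stack at its end originates from
the topmost `k`-stack at its start. -/
def IsUpper (R : Run D) (k : ℕ) : Prop :=
  histTo R 0 R.len (topAddr (R.cfg R.len).2 (n - k)) = topAddr (R.cfg 0).2 (n - k)

/-- A run is a `k`-return when the topmost `(k-1)`-stack at its end originates from the
topmost `(k-1)`-stack of `pop^k` of its starting stack, and no suffix is `(k-1)`-upper. -/
def IsReturn (R : Run D) (k : ℕ) : Prop :=
  (histTo R 0 R.len (topAddr (R.cfg R.len).2 (n - (k - 1))) =
    topAddr (R.cfg 0).2 (n - k) ++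
      [sizeAt (R.cfg 0).2 (topAddr (R.cfg 0).2 (n - k)) - 2]) ∧
  ∀ i < R.len, ¬ (R.sub i R.len).IsUpper (k - 1)

end Run

/-- `R` is the composition `S ∘ T` of the runs `S` and `T`. -/
def IsComp {n : ℕ} {A Γ : Type} {D : DPDA n A Γ} (R S T : Run D) : Prop :=
  S.cfg S.len = T.cfg 0 ∧ R.len = S.len + T.len ∧
  (∀ i ≤ S.len, R.cfg i = S.cfg i) ∧ (∀ i < S.len, R.lab i = S.lab i) ∧
  (∀ i ≤ T.len, R.cfg (S.len + i) = T.cfg i) ∧ (∀ i < T.len, R.lab (S.len + i) = T.lab i)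

/-- `Decomp R k r c` : `c 0 < c 1 < … < c r` are the cut points of the (unique)
decomposition of the `k`-upper run `R` into the maximal number of nonempty
`k`-upper runs. -/
def Decomp {n : ℕ} {A Γ : Type} {D : DPDA n A Γ} (R : Run D) (k r : ℕ) (c : ℕ → ℕ) : Prop :=
  c 0 = 0 ∧ c r = R.len ∧ (∀ j < r, c j < c (j + 1)) ∧ (∀ j ≤ r, c j ≤ R.len) ∧
  (∀ j < r, (R.sub (c j) (c (j + 1))).IsUpper k) ∧
  (∀ j < r, ∀ i, c j < i → i < c (j + 1) → ¬ (R.sub i (c (j + 1))).IsUpper k)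

/-- The image under the morphism generated by `φ` of a word. -/
def phiW {A M : Type} [Monoid M] (φ : A → M) (w : List A) : M := (w.map φ).prod

/-- The two `k`-upper runs `R` and `S` are `(k,φ)`-parallel. -/
def Parallel {n : ℕ} {A Γ M : Type} [Monoid M] {D : DPDA n A Γ}
    (φ : A → M) (R S : Run D) (k : ℕ) : Prop :=
  R.IsUpper k ∧ S.IsUpper k ∧
  topStk n (R.cfg R.len).2 k = topStk n (S.cfg S.len).2 k ∧
  ∃ (r : ℕ) (cR cS : ℕ → ℕ), Decomp R k r cR ∧ Decomp S k r cS ∧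
    ∀ j < r,
      phiW φ (R.sub (cR j) (cR (j + 1))).word = phiW φ (S.sub (cS j) (cS (j + 1))).word ∧
      topStk n (R.cfg (cR j)).2 k = topStk n (S.cfg (cS j)).2 k

/-- An infinite run of an `n`-DPDA. -/
structure InfRun {n : ℕ} {A Γ : Type} (D : DPDA n A Γ) where
  cfg : ℕ → D.Q × St Γ
  lab : ℕ → Option A
  ok : ∀ i, Step D (cfg i) (lab i) (cfg (i + 1))

/-- The finite subrun `R[i,j]` of an infinite run. -/
def InfRun.sub {n : ℕ} {A Γ : Type} {D : DPDA n A Γ} (R : InfRun D) (i j : ℕ) : Run D where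
  len := j - i
  cfg := fun t => R.cfg (i + t)
  lab := fun t => R.lab (i + t)
  ok := fun t _ => R.ok (i + t)

/-- A step label reads nothing, or reads the `star` symbol. -/
def OnlyStar {A : Type} (star : A) (o : Option A) : Prop := o = none ∨ o = some star

/-- Milestone configurations. -/
def Milestone {n : ℕ} {A Γ : Type} {D : DPDA n A Γ} (star : A) (c : D.Q × St Γ) : Prop :=
  ∃ R : InfRun D, R.cfg 0 = c ∧ (∀ i, OnlyStar star (R.lab i)) ∧
    ∃ I : Set ℕ, I.Infinite ∧ 0 ∈ I ∧ ∀ i ∈ I, ∀ j ∈ I, i ≤ j → (R.sub i j).IsUpper 0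

/-- The initial order-`n` stack, containing the single symbol `γ`. -/
def initStack (n : ℕ) {Γ : Type} (γ : Γ) : St Γ :=
  Nat.rec (motive := fun _ => St Γ) (St.leaf γ) (fun _ s => St.node [s]) n

def initCfg {n : ℕ} {A Γ : Type} (D : DPDA n A Γ) : D.Q × St Γ := (D.qI, initStack n D.γI)

/-- The language recognized by an `n`-DPDA. -/
def Lang {n : ℕ} {A Γ : Type} (D : DPDA n A Γ) : Set (List A) :=
  { w | ∃ R : Run D, R.cfg 0 = initCfg D ∧ R.word = w ∧ (R.cfg R.len).1 ∈ D.F }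

/-! ### Deterministic order-2 collapsible pushdown automata -/

/-- Stack operations of an order-2 collapsible pushdown automaton. -/
inductive COp (Γ : Type) where
  | pop1
  | pop2
  | push1 (γ : Γ)
  | push2 (γ : Γ)
  | collapse

/-- An order-2 collapsible stack: a list of 1-stacks (topmost first), each a list of
0-stacks (topmost first) storing a symbol and the collapse link (a natural number). -/
abbrev CStk (Γ : Type) := List (List (Γ × ℕ))

/-- Semantics of the order-2 collapsible stack operations. -/
def capply {Γ : Type} : COp Γ → CStk Γ → Option (CStk Γ)
  | COp.pop1, (_ :: x :: t) :: rest => some ((x :: t) :: rest)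
  | COp.pop1, _ => none
  | COp.pop2, _ :: s :: rest => some (s :: rest)
  | COp.pop2, _ => none
  | COp.push1 γ, (x :: t) :: rest => some (((γ, rest.length + 1) :: x :: t) :: rest)
  | COp.push1 _, _ => none
  | COp.push2 γ, ((x, m) :: t) :: rest => some (((γ, m) :: t) :: ((x, m) :: t) :: rest)
  | COp.push2 _, _ => none
  | COp.collapse, ((x, m) :: t) :: rest =>
      if 1 ≤ m - 1 ∧ m - 1 ≤ rest.length + 1 then
        some ((((x, m) :: t) :: rest).drop (rest.length + 1 - (m - 1)))
      else none
  | COp.collapse, _ => none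

/-- The topmost stack symbol of an order-2 collapsible stack. -/
def ctop? {Γ : Type} : CStk Γ → Option Γ
  | ((γ, _) :: _) :: _ => some γ
  | _ => none

inductive CTrans (A Γ Q : Type) where
  | read (f : A → Q)
  | op (q : Q) (o : COp Γ)

/-- A deterministic order-2 collapsible pushdown automaton. -/
structure CPDA2 (A Γ : Type) where
  Q : Type
  finQ : Finite Q
  qI : Q
  γI : Γ
  F : Set Q
  δ : Q → Γ → CTrans A Γ Q
  read_inj : ∀ q γ f, δ q γ = CTrans.read f → Function.Injective f

inductive CStep {A Γ : Type} (D : CPDA2 A Γ) :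
    D.Q × CStk Γ → Option A → D.Q × CStk Γ → Prop where
  | read {q : D.Q} {s : CStk Γ} {γ : Γ} {f : A → D.Q} (a : A) :
      ctop? s = some γ → D.δ q γ = CTrans.read f → CStep D (q, s) (some a) (f a, s)
  | op {q : D.Q} {s s' : CStk Γ} {γ : Γ} {q' : D.Q} {o : COp Γ} :
      ctop? s = some γ → D.δ q γ = CTrans.op q' o → capply o s = some s' →
      CStep D (q, s) none (q', s')

structure CRun {A Γ : Type} (D : CPDA2 A Γ) where
  len : ℕ
  cfg : ℕ → D.Q × CStk Γ
  lab : ℕ → Option A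
  ok : ∀ i < len, CStep D (cfg i) (lab i) (cfg (i + 1))

def CRun.word {A Γ : Type} {D : CPDA2 A Γ} (R : CRun D) : List A :=
  (List.range R.len).filterMap R.lab

def cinitCfg {A Γ : Type} (D : CPDA2 A Γ) : D.Q × CStk Γ := (D.qI, [[(D.γI, 1)]])

/-- The language recognized by a 2-DCPDA. -/
def CLang {A Γ : Type} (D : CPDA2 A Γ) : Set (List A) :=
  { w | ∃ R : CRun D, R.cfg 0 = cinitCfg D ∧ R.word = w ∧ (R.cfg R.len).1 ∈ D.F }

/-! ### The alphabet `{[, ], ⋆, ♯}`, the function `stars`, and the language `U` -/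

inductive Alph : Type where
  | lb    -- the opening bracket [
  | rb    -- the closing bracket ]
  | star  -- ⋆
  | sharp -- ♯
  deriving DecidableEq

instance : Fintype Alph :=
  ⟨{Alph.lb, Alph.rb, Alph.star, Alph.sharp}, fun x => by cases x <;> simp⟩

/-- Processes a word over `{[, ], ⋆}`, keeping the total number of stars read so far and,
for each currently unmatched opening bracket (most recent first), the number of stars
read before it; returns `none` iff some prefix has more `]` than `[`. -/
def starsAux : List Alph → ℕ → List ℕ → Option (List ℕ)
  | [], _, st => some st
  | Alph.star :: w, cnt, st => starsAux w (cnt + 1) st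
  | Alph.lb :: w, cnt, st => starsAux w cnt (cnt :: st)
  | Alph.rb :: w, cnt, st =>
      match st with
      | [] => none
      | _ :: st' => starsAux w cnt st'
  | Alph.sharp :: _, _, _ => none

/-- `stars w` : `0` if some prefix of `w` has more closing than opening brackets, or if
`w` has equally many opening and closing brackets; otherwise the number of `⋆`s in `w`
before the last opening bracket of `w` not matched by a closing bracket. -/
def stars (w : List Alph) : ℕ :=
  match starsAux w 0 [] with
  | some (c :: _) => c
  | _ => 0

/-- The language `U = { w ♯^(stars(w)+1) | w ∈ {[, ], ⋆}* }`. -/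
def U : Set (List Alph) :=
  { u | ∃ w : List Alph, Alph.sharp ∉ w ∧ u = w ++ List.replicate (stars w + 1) Alph.sharp }

/-! ### Tree-generating pushdown systems -/

inductive TTrans (A Γ Q : Type) where
  | branch (a : A) (next : ℕ → Q)
  | op (q : Q) (o : Op Γ)

/-- A deterministic tree-generating order-`n` pushdown system (without collapse)
over the ranked alphabet `(A, rank)`. -/
structure TreePDA (n : ℕ) (A Γ : Type) (rank : A → ℕ) where
  Q : Type
  finQ : Finite Q
  qI : Q
  γI : Γ
  δ : Q → Γ → TTrans A Γ Q
  branch_inj : ∀ q γ a next, δ q γ = TTrans.branch a next →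
      ∀ i j, i < rank a → j < rank a → next i = next j → i = j

/-- One step of a tree-generating `n`-PDS; the label records the child chosen
at a branch step (if any). -/
inductive TStep {n : ℕ} {A Γ : Type} {rank : A → ℕ} (D : TreePDA n A Γ rank) :
    D.Q × St Γ → Option ℕ → D.Q × St Γ → Prop where
  | branch {q : D.Q} {s : St Γ} {γ : Γ} {a : A} {next : ℕ → D.Q} {i : ℕ} :
      IsValid n s → topLeaf? n s = some γ → D.δ q γ = TTrans.branch a next → i < rank a →
      TStep D (q, s) (some i) (next i, s)
  | op {q : D.Q} {s s' : St Γ} {γ : Γ} {q' : D.Q} {o : Op Γ} :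
      IsValid n s → topLeaf? n s = some γ → D.δ q γ = TTrans.op q' o →
      applyOp n o s = some s' →
      TStep D (q, s) none (q', s')

def TReach {n : ℕ} {A Γ : Type} {rank : A → ℕ} (D : TreePDA n A Γ rank) :
    D.Q × St Γ → D.Q × St Γ → Prop :=
  Relation.ReflTransGen (fun c c' => ∃ o, TStep D c o c')

def TOpReach {n : ℕ} {A Γ : Type} {rank : A → ℕ} (D : TreePDA n A Γ rank) :
    D.Q × St Γ → D.Q × St Γ → Prop :=
  Relation.ReflTransGen (fun c c' => TStep D c none c')

/-- `c` is a configuration at which a `branch(a,…)` transition applies. -/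
def TIsBr {n : ℕ} {A Γ : Type} {rank : A → ℕ} (D : TreePDA n A Γ rank)
    (c : D.Q × St Γ) (a : A) : Prop :=
  ∃ γ next, IsValid n c.2 ∧ topLeaf? n c.2 = some γ ∧ D.δ c.1 γ = TTrans.branch a next

/-- `TFollow D c p c'` : starting from the branch configuration `c` and following
the child choices `p` (each branch step being followed by op steps up to the next
branch configuration) one arrives at the branch configuration `c'`. -/
inductive TFollow {n : ℕ} {A Γ : Type} {rank : A → ℕ} (D : TreePDA n A Γ rank) :
    D.Q × St Γ → List ℕ → D.Q × St Γ → Prop where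
  | nil (c : D.Q × St Γ) : TFollow D c [] c
  | cons {c c₁ c₂ c₃ : D.Q × St Γ} {i : ℕ} {p : List ℕ} :
      TStep D c (some i) c₁ → TOpReach D c₁ c₂ → (∃ a, TIsBr D c₂ a) →
      TFollow D c₂ p c₃ → TFollow D c (i :: p) c₃

def tinitCfg {n : ℕ} {A Γ : Type} {rank : A → ℕ} (D : TreePDA n A Γ rank) : D.Q × St Γ :=
  (D.qI, initStack n D.γI)

/-- `D` generates the ranked tree whose labelling function is `t`
(`t p = some a` iff the node at position `p` exists and is labelled `a`). -/
def TGenerates {n : ℕ} {A Γ : Type} {rank : A → ℕ} (D : TreePDA n A Γ rank)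
    (t : List ℕ → Option A) : Prop :=
  (∀ c, TReach D (tinitCfg D) c → ∃ c' a, TReach D c c' ∧ TIsBr D c' a) ∧
  ∃ c₀, TOpReach D (tinitCfg D) c₀ ∧ (∃ a, TIsBr D c₀ a) ∧
    ∀ p a, t p = some a ↔ ∃ c, TFollow D c₀ p c ∧ TIsBr D c a

/-! ### Tree-generating order-2 collapsible pushdown systems -/

inductive CTTrans (A Γ Q : Type) where
  | branch (a : A) (next : ℕ → Q)
  | op (q : Q) (o : COp Γ)

structure CTreePDA (A Γ : Type) (rank : A → ℕ) where
  Q : Type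
  finQ : Finite Q
  qI : Q
  γI : Γ
  δ : Q → Γ → CTTrans A Γ Q
  branch_inj : ∀ q γ a next, δ q γ = CTTrans.branch a next →
      ∀ i j, i < rank a → j < rank a → next i = next j → i = j

inductive CTStep {A Γ : Type} {rank : A → ℕ} (D : CTreePDA A Γ rank) :
    D.Q × CStk Γ → Option ℕ → D.Q × CStk Γ → Prop where
  | branch {q : D.Q} {s : CStk Γ} {γ : Γ} {a : A} {next : ℕ → D.Q} {i : ℕ} :
      ctop? s = some γ → D.δ q γ = CTTrans.branch a next → i < rank a →
      CTStep D (q, s) (some i) (next i, s)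
  | op {q : D.Q} {s s' : CStk Γ} {γ : Γ} {q' : D.Q} {o : COp Γ} :
      ctop? s = some γ → D.δ q γ = CTTrans.op q' o → capply o s = some s' →
      CTStep D (q, s) none (q', s')

def CTReach {A Γ : Type} {rank : A → ℕ} (D : CTreePDA A Γ rank) :
    D.Q × CStk Γ → D.Q × CStk Γ → Prop :=
  Relation.ReflTransGen (fun c c' => ∃ o, CTStep D c o c')

def CTOpReach {A Γ : Type} {rank : A → ℕ} (D : CTreePDA A Γ rank) :
    D.Q × CStk Γ → D.Q × CStk Γ → Prop :=
  Relation.ReflTransGen (fun c c' => CTStep D c none c')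

def CTIsBr {A Γ : Type} {rank : A → ℕ} (D : CTreePDA A Γ rank)
    (c : D.Q × CStk Γ) (a : A) : Prop :=
  ∃ γ next, ctop? c.2 = some γ ∧ D.δ c.1 γ = CTTrans.branch a next

inductive CTFollow {A Γ : Type} {rank : A → ℕ} (D : CTreePDA A Γ rank) :
    D.Q × CStk Γ → List ℕ → D.Q × CStk Γ → Prop where
  | nil (c : D.Q × CStk Γ) : CTFollow D c [] c
  | cons {c c₁ c₂ c₃ : D.Q × CStk Γ} {i : ℕ} {p : List ℕ} :
      CTStep D c (some i) c₁ → CTOpReach D c₁ c₂ → (∃ a, CTIsBr D c₂ a) →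
      CTFollow D c₂ p c₃ → CTFollow D c (i :: p) c₃

def ctinitCfg {A Γ : Type} {rank : A → ℕ} (D : CTreePDA A Γ rank) : D.Q × CStk Γ :=
  (D.qI, [[(D.γI, 1)]])

/-- The order-2 collapsible pushdown system `D` generates the ranked tree whose
labelling function is `t`. -/
def CTGenerates {A Γ : Type} {rank : A → ℕ} (D : CTreePDA A Γ rank)
    (t : List ℕ → Option A) : Prop :=
  (∀ c, CTReach D (ctinitCfg D) c → ∃ c' a, CTReach D c c' ∧ CTIsBr D c' a) ∧
  ∃ c₀, CTOpReach D (ctinitCfg D) c₀ ∧ (∃ a, CTIsBr D c₀ a) ∧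
    ∀ p a, t p = some a ↔ ∃ c, CTFollow D c₀ p c ∧ CTIsBr D c a


/-! ### Auxiliary machinery for Statement 7 -/

section Aux

variable {Γ : Type}

theorem ne_of_length_ne {α : Type} {l₁ l₂ : List α} (h : l₁.length ≠ l₂.length) :
    l₁ ≠ l₂ := fun e => h (e ▸ rfl)

theorem take_set_of_le (l : List ℕ) (m c : ℕ) {d : ℕ} (h : d ≤ m) :
    (l.set m c).take d = l.take d := by
  apply List.ext_getElem?
  intro i
  rw [List.getElem?_take, List.getElem?_take]
  split
  · exact List.getElem?_set_ne (by omega)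
  · rfl

theorem set_take_comm (l : List ℕ) {m d : ℕ} (c : ℕ) (h : m < d) :
    (l.set m c).take d = (l.take d).set m c := by
  apply List.ext_getElem?
  intro i
  by_cases him : m = i
  · subst him
    simp only [List.getElem?_take, List.getElem?_set, List.length_set, List.length_take,
      lt_inf_iff, if_pos rfl]
    split_ifs <;> first | rfl | omega | (exfalso; omega)
  · rw [List.getElem?_take, List.getElem?_set_ne him, List.getElem?_set_ne him,
      List.getElem?_take]

theorem set_append_len (u xs : List ℕ) (c x : ℕ) :
    (u ++ x :: xs).set u.length c = u ++ c :: xs := by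
  induction u with
  | nil => rfl
  | cons a u ih => simpa [List.set] using ih

theorem set_append_lt (u xs : List ℕ) (c m : ℕ) (h : m < u.length) :
    (u ++ xs).set m c = u.set m c ++ xs := by
  rw [List.set_append, if_pos h]

theorem take_append_cons (u xs : List ℕ) (x : ℕ) :
    (u ++ x :: xs).take (u.length + 1) = u ++ [x] := by
  rw [List.take_append]
  simp

theorem set_append_len' (u xs : List ℕ) (c x : ℕ) {m : ℕ} (h : u.length = m) :
    (u ++ x :: xs).set m c = u ++ c :: xs := by
  rw [← h, set_append_len]

theorem take_append_cons' (u xs : List ℕ) (x : ℕ) {m : ℕ} (h : u.length = m) :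
    (u ++ x :: xs).take (m + 1) = u ++ [x] := by
  rw [← h, take_append_cons]

/-! #### `sub?` basics -/

theorem sub?_nil (s : St Γ) : sub? s [] = some s := by cases s <;> rfl

theorem sub?_leaf (γ : Γ) (i : ℕ) (p : List ℕ) : sub? (St.leaf γ) (i :: p) = none := rfl

theorem sub?_node (l : List (St Γ)) (i : ℕ) (p : List ℕ) :
    sub? (St.node l) (i :: p) = l[i]?.bind (fun t => sub? t p) := by
  cases h : l[i]? <;> simp [sub?, h]

theorem sub?_append (s : St Γ) (p q : List ℕ) :
    sub? s (p ++ q) = (sub? s p).bind (fun u => sub? u q) := by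
  induction p generalizing s with
  | nil => rw [List.nil_append, sub?_nil, Option.bind_some]
  | cons i p ih =>
    cases s with
    | leaf γ => rfl
    | node l =>
      rw [List.cons_append, sub?_node, sub?_node]
      cases h : l[i]? with
      | none => rfl
      | some t => exact ih t

theorem isSome_of_append {s : St Γ} {p q : List ℕ} (h : (sub? s (p ++ q)).isSome) :
    (sub? s p).isSome := by
  rw [sub?_append] at h
  cases hs : sub? s p with
  | none => rw [hs] at h; simp at h
  | some u => rfl

theorem valid_last {s : St Γ} {w : List ℕ} {x : ℕ} (h : (sub? s (w ++ [x])).isSome) :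
    ∃ l, sub? s w = some (St.node l) ∧ x < l.length := by
  rw [sub?_append] at h
  cases hw : sub? s w with
  | none => rw [hw] at h; simp at h
  | some u =>
    rw [hw] at h
    simp only [Option.bind_some] at h
    cases u with
    | leaf γ => rw [sub?_leaf] at h; simp at h
    | node l =>
      rw [sub?_node] at h
      cases hx : l[x]? with
      | none => rw [hx] at h; simp at h
      | some t =>
        refine ⟨l, rfl, ?_⟩
        have := List.getElem?_eq_some_iff.mp hx
        exact this.1

theorem valid_last_of {s : St Γ} {w : List ℕ} {x : ℕ} {l : List (St Γ)}
    (hw : sub? s w = some (St.node l)) (hx : x < l.length) :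
    (sub? s (w ++ [x])).isSome := by
  rw [sub?_append, hw]
  simp only [Option.bind_some]
  rw [sub?_node]
  cases hg : l[x]? with
  | none => simp [List.getElem?_eq_none_iff] at hg; omega
  | some t => simp [sub?]

theorem sizeAt_of_sub {s : St Γ} {p : List ℕ} {l : List (St Γ)}
    (h : sub? s p = some (St.node l)) : sizeAt s p = l.length := by
  simp [sizeAt, h]

end Aux

section Shape

variable {Γ : Type}

/-- Two stacks have the same shape (they differ only in their leaf labels). -/
inductive SameSh : St Γ → St Γ → Prop where
  | leaf (γ γ' : Γ) : SameSh (.leaf γ) (.leaf γ')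
  | node (l l' : List (St Γ)) (hlen : l.length = l'.length)
      (h : ∀ (i : ℕ) (u u' : St Γ), l[i]? = some u → l'[i]? = some u' → SameSh u u') :
      SameSh (.node l) (.node l')

theorem SameSh.refl : ∀ (s : St Γ), SameSh s s
  | .leaf γ => .leaf γ γ
  | .node l => .node l l rfl (fun i u u' hu hu' => by
      have he : u = u' := by rw [hu] at hu'; exact Option.some.inj hu'
      subst he
      have hm : u ∈ l := List.mem_of_getElem? hu
      have : sizeOf u < sizeOf (St.node l) := by
        have := List.sizeOf_lt_of_mem hm
        simp only [St.node.sizeOf_spec]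
        omega
      exact SameSh.refl u)
termination_by s => sizeOf s

theorem SameSh.sub?_rel {s s' : St Γ} (h : SameSh s s') (p : List ℕ) :
    (sub? s p = none ∧ sub? s' p = none) ∨
      ∃ u u', sub? s p = some u ∧ sub? s' p = some u' ∧ SameSh u u' := by
  induction h generalizing p with
  | leaf γ γ' =>
    cases p with
    | nil => exact Or.inr ⟨_, _, sub?_nil _, sub?_nil _, .leaf γ γ'⟩
    | cons i q => exact Or.inl ⟨rfl, rfl⟩
  | node l l' hlen h ih =>
    cases p with
    | nil => exact Or.inr ⟨_, _, sub?_nil _, sub?_nil _, .node l l' hlen h⟩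
    | cons i q =>
      rw [sub?_node, sub?_node]
      cases hu : l[i]? with
      | none =>
        have : l'[i]? = none := by
          rw [List.getElem?_eq_none_iff] at hu ⊢; omega
        rw [this]
        exact Or.inl ⟨rfl, rfl⟩
      | some u =>
        have hu' : ∃ u', l'[i]? = some u' := by
          have hi : i < l'.length := by
            have := (List.getElem?_eq_some_iff.mp hu).1; omega
          cases hg : l'[i]? with
          | none => rw [List.getElem?_eq_none_iff] at hg; omega
          | some u' => exact ⟨u', rfl⟩
        obtain ⟨u', hg⟩ := hu'
        rw [hg]
        simp only [Option.bind_some]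
        exact ih i u u' hu hg q

theorem SameSh.sub?_isSome {s s' : St Γ} (h : SameSh s s') (p : List ℕ) :
    (sub? s p).isSome = (sub? s' p).isSome := by
  rcases h.sub?_rel p with ⟨h1, h2⟩ | ⟨u, u', h1, h2, _⟩ <;> rw [h1, h2] <;> rfl

theorem SameSh.sizeAt_eq {s s' : St Γ} (h : SameSh s s') (p : List ℕ) :
    sizeAt s p = sizeAt s' p := by
  rcases h.sub?_rel p with ⟨h1, h2⟩ | ⟨u, u', h1, h2, hss⟩
  · simp [sizeAt, h1, h2]
  · simp only [sizeAt, h1, h2]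
    cases hss with
    | leaf => rfl
    | node l l' hlen _ => simpa using hlen

theorem SameSh.topAddr_eq {s s' : St Γ} (h : SameSh s s') (d : ℕ) :
    topAddr s d = topAddr s' d := by
  induction d generalizing s s' with
  | zero => cases s <;> cases s' <;> rfl
  | succ d ih =>
    cases h with
    | leaf => rfl
    | node l l' hlen hh =>
      simp only [topAddr, hlen]
      congr 1
      rcases List.eq_nil_or_concat l with hnil | ⟨l₀, t, rfl⟩
      · subst hnil
        have : l' = [] := by simpa using hlen.symm
        subst this
        exact ih (SameSh.node [] [] rfl (by simp))
      · rw [List.concat_eq_append] at *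
        have hlpos : 0 < l'.length := by simp at hlen ⊢; omega
        rcases List.eq_nil_or_concat l' with hnil' | ⟨l₀', t', rfl⟩
        · subst hnil'; simp at hlpos
        · rw [List.concat_eq_append] at *
          have h1 : (l₀ ++ [t]).getLastD (St.node []) = t := by
            simp [List.getLastD_eq_getLast?]
          have h2 : (l₀' ++ [t']).getLastD (St.node []) = t' := by
            simp [List.getLastD_eq_getLast?]
          rw [h1, h2]
          apply ih
          apply hh ((l₀ ++ [t]).length - 1)
          · simp
          · have : (l₀ ++ [t]).length - 1 = (l₀' ++ [t']).length - 1 := by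
              simp at hlen ⊢; omega
            rw [this]
            simp
      
theorem SameSh.isValid {s s' : St Γ} (h : SameSh s s') : ∀ m, IsValid m s → IsValid m s' := by
  induction h with
  | leaf γ γ' =>
    intro m hv
    cases m with
    | zero => trivial
    | succ m => exact absurd hv (by simp [IsValid])
  | node l l' hlen h ih =>
    intro m hv
    cases m with
    | zero => exact absurd hv (by simp [IsValid])
    | succ m =>
      obtain ⟨hne, hmem⟩ := hv
      have hne' : l' ≠ [] := by
        have hpos := List.length_pos_iff.mpr hne
        intro hc; subst hc; rw [List.length_nil] at hlen; omega
      refine ⟨hne', ?_⟩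
      intro t' ht'
      obtain ⟨i, hi, hget⟩ := List.getElem_of_mem ht'
      have hil : i < l.length := by omega
      have hu : l[i]? = some l[i] := List.getElem?_eq_some_iff.mpr ⟨hil, rfl⟩
      have hu' : l'[i]? = some t' := List.getElem?_eq_some_iff.mpr ⟨hi, hget⟩
      exact ih i _ _ hu hu' m (hmem _ (List.getElem_mem hil))

end Shape

section ModAt

variable {Γ : Type}

theorem modAt_nil (s : St Γ) (F : St Γ → Option (St Γ)) : modAt s [] F = F s := by
  cases s <;> rfl

theorem modAt_node {l : List (St Γ)} {i : ℕ} {p : List ℕ} {F : St Γ → Option (St Γ)} :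
    modAt (St.node l) (i :: p) F =
      l[i]?.bind (fun t => (modAt t p F).map (fun t' => St.node (l.set i t'))) := by
  cases h : l[i]? with
  | none => simp [modAt, h]
  | some t =>
    simp only [modAt, h, Option.bind_some]
    cases h2 : modAt t p F <;> simp [h2]

theorem modAt_self : ∀ (α : List ℕ) (s s' : St Γ) (F : St Γ → Option (St Γ)),
    modAt s α F = some s' →
    ∃ u u', sub? s α = some u ∧ F u = some u' ∧ sub? s' α = some u' := by
  intro α
  induction α with
  | nil =>
    intro s s' F h
    rw [modAt_nil] at h
    exact ⟨s, s', sub?_nil s, h, sub?_nil s'⟩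
  | cons i p ih =>
    intro s s' F h
    cases s with
    | leaf γ => exact absurd h (by simp [modAt])
    | node l =>
      rw [modAt_node] at h
      cases hg : l[i]? with
      | none => rw [hg] at h; simp at h
      | some t =>
        rw [hg] at h
        simp only [Option.bind_some] at h
        cases hm : modAt t p F with
        | none => rw [hm] at h; simp at h
        | some t' =>
          rw [hm] at h
          simp only [Option.map_some] at h
          obtain ⟨u, u', h1, h2, h3⟩ := ih t t' F hm
          have hs' : s' = St.node (l.set i t') := (Option.some.inj h).symm
          subst hs'
          refine ⟨u, u', ?_, h2, ?_⟩
          · rw [sub?_node, hg, Option.bind_some, h1]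
          · rw [sub?_node]
            have hi : i < l.length := (List.getElem?_eq_some_iff.mp hg).1
            rw [List.getElem?_set_self (by simpa using hi), Option.bind_some, h3]

theorem modAt_stable : ∀ (α : List ℕ) (s s' : St Γ) (F : St Γ → Option (St Γ)),
    modAt s α F = some s' →
    ∀ p, ¬ p <+: α → ¬ α <+: p → sub? s' p = sub? s p := by
  intro α
  induction α with
  | nil => intro s s' F h p h1 h2; exact absurd (List.nil_prefix) h2
  | cons i q ih =>
    intro s s' F h p h1 h2
    cases s with
    | leaf γ => exact absurd h (by simp [modAt])
    | node l =>
      rw [modAt_node] at h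
      cases hg : l[i]? with
      | none => rw [hg] at h; simp at h
      | some t =>
        rw [hg] at h
        simp only [Option.bind_some] at h
        cases hm : modAt t q F with
        | none => rw [hm] at h; simp at h
        | some t' =>
          rw [hm] at h
          simp only [Option.map_some] at h
          have hs' : s' = St.node (l.set i t') := (Option.some.inj h).symm
          subst hs'
          cases p with
          | nil => exact absurd (List.nil_prefix) h1
          | cons j r =>
            rw [sub?_node, sub?_node]
            by_cases hij : j = i
            · subst hij
              have hi : j < l.length := (List.getElem?_eq_some_iff.mp hg).1
              rw [List.getElem?_set_self (by simpa using hi), hg]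
              simp only [Option.bind_some]
              exact ih t t' F hm r
                (fun hc => h1 (List.cons_prefix_cons.mpr ⟨rfl, hc⟩))
                (fun hc => h2 (List.cons_prefix_cons.mpr ⟨rfl, hc⟩))
            · rw [List.getElem?_set_ne (fun hc => hij hc.symm)]

theorem modAt_prefix : ∀ (α : List ℕ) (s s' : St Γ) (F : St Γ → Option (St Γ)),
    modAt s α F = some s' →
    ∀ p, p <+: α → p ≠ α →
    ∃ l l', sub? s p = some (St.node l) ∧ sub? s' p = some (St.node l') ∧
      l'.length = l.length := by
  intro α
  induction α with
  | nil =>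
    intro s s' F h p h1 h2
    exact absurd (List.prefix_nil.mp h1) h2
  | cons i q ih =>
    intro s s' F h p h1 h2
    cases s with
    | leaf γ => exact absurd h (by simp [modAt])
    | node l =>
      rw [modAt_node] at h
      cases hg : l[i]? with
      | none => rw [hg] at h; simp at h
      | some t =>
        rw [hg] at h
        simp only [Option.bind_some] at h
        cases hm : modAt t q F with
        | none => rw [hm] at h; simp at h
        | some t' =>
          rw [hm] at h
          simp only [Option.map_some] at h
          have hs' : s' = St.node (l.set i t') := (Option.some.inj h).symm
          subst hs'
          cases p with
          | nil => exact ⟨l, l.set i t', sub?_nil _, sub?_nil _, by simp⟩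
          | cons j r =>
            obtain ⟨hji, hrq⟩ := List.cons_prefix_cons.mp h1
            subst hji
            have hi : j < l.length := (List.getElem?_eq_some_iff.mp hg).1
            rw [sub?_node, sub?_node, hg,
              List.getElem?_set_self (by simpa using hi)]
            simp only [Option.bind_some]
            exact ih t t' F hm r hrq (fun hc => h2 (by rw [hc]))

theorem modAt_isValid : ∀ (α : List ℕ) (s s' : St Γ) (F : St Γ → Option (St Γ)) (m : ℕ),
    IsValid m s → modAt s α F = some s' →
    (∀ u u', sub? s α = some u → F u = some u' →
      IsValid (m - α.length) u → IsValid (m - α.length) u') →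
    IsValid m s' := by
  intro α
  induction α with
  | nil =>
    intro s s' F m hv h hF
    rw [modAt_nil] at h
    simpa using hF s s' (sub?_nil s) h (by simpa using hv)
  | cons i q ih =>
    intro s s' F m hv h hF
    cases s with
    | leaf γ => exact absurd h (by simp [modAt])
    | node l =>
      rw [modAt_node] at h
      cases hg : l[i]? with
      | none => rw [hg] at h; simp at h
      | some t =>
        rw [hg] at h
        simp only [Option.bind_some] at h
        cases hm : modAt t q F with
        | none => rw [hm] at h; simp at h
        | some t' =>
          rw [hm] at h
          simp only [Option.map_some] at h
          have hs' : s' = St.node (l.set i t') := (Option.some.inj h).symm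
          subst hs'
          cases m with
          | zero => exact absurd hv (by simp [IsValid])
          | succ m =>
            obtain ⟨hne, hmem⟩ := hv
            have hi : i < l.length := (List.getElem?_eq_some_iff.mp hg).1
            have hvt : IsValid m t := hmem t (List.mem_of_getElem? hg)
            have hvt' : IsValid m t' := by
              refine ih t t' F m hvt hm ?_
              intro u u' hu hFu hvu
              have : sub? (St.node l) (i :: q) = some u := by
                rw [sub?_node, hg, Option.bind_some, hu]
              have h5 := hF u u' this hFu
              simp only [List.length_cons, Nat.succ_sub_succ] at h5
              exact h5 hvu
            refine ⟨by simp [hne], ?_⟩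
            intro v hvmem
            obtain ⟨jj, hjj⟩ := List.mem_iff_getElem?.mp hvmem
            by_cases hji : jj = i
            · subst hji
              rw [List.getElem?_set_self (by simpa using hi)] at hjj
              exact (Option.some.inj hjj) ▸ hvt'
            · rw [List.getElem?_set_ne (fun hc => hji hc.symm)] at hjj
              exact hmem _ (List.mem_of_getElem? hjj)

theorem modAt_shape_sameSh {F : St Γ → Option (St Γ)}
    (hFP : ∀ u u', F u = some u' → SameSh u u') :
    ∀ (α : List ℕ) (t t' : St Γ), modAt t α F = some t' → SameSh t t' := by
  intro α
  induction α with
  | nil =>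
    intro t t' h
    rw [modAt_nil] at h
    exact hFP t t' h
  | cons i q ih =>
    intro t t' h
    cases t with
    | leaf γ₀ => exact absurd h (by simp [modAt])
    | node l =>
      rw [modAt_node] at h
      cases hg : l[i]? with
      | none => rw [hg] at h; simp at h
      | some u =>
        rw [hg] at h
        simp only [Option.bind_some] at h
        cases hm : modAt u q F with
        | none => rw [hm] at h; simp at h
        | some u' =>
          rw [hm] at h
          simp only [Option.map_some] at h
          have hs' : t' = St.node (l.set i u') := (Option.some.inj h).symm
          subst hs'
          refine .node _ _ (by simp) ?_
          intro jj v v' hv hv'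
          by_cases hji : jj = i
          · subst hji
            have hi : jj < l.length := (List.getElem?_eq_some_iff.mp hg).1
            rw [List.getElem?_set_self (by simpa using hi)] at hv'
            rw [hg] at hv
            have h1 : u = v := Option.some.inj hv
            have h2 : u' = v' := Option.some.inj hv'
            cases h1; cases h2
            exact ih _ _ hm
          · rw [List.getElem?_set_ne (fun hc => hji hc.symm)] at hv'
            rw [hv] at hv'
            have : v = v' := Option.some.inj hv'
            subst this
            exact SameSh.refl v

end ModAt

section TopAddr

variable {Γ : Type}

theorem topAddr_zero (s : St Γ) : topAddr s 0 = [] := by cases s <;> rfl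

theorem topAddr_node (l : List (St Γ)) (d : ℕ) :
    topAddr (St.node l) (d + 1) = (l.length - 1) :: topAddr (l.getLastD (St.node [])) d := rfl

theorem topAddr_spec : ∀ (d m : ℕ) (s : St Γ), IsValid m s → d ≤ m →
    ∃ u, sub? s (topAddr s d) = some u ∧ IsValid (m - d) u ∧ (topAddr s d).length = d := by
  intro d
  induction d with
  | zero =>
    intro m s hv _
    exact ⟨s, by rw [topAddr_zero, sub?_nil], by simpa using hv, by simp [topAddr_zero]⟩
  | succ d ih =>
    intro m s hv hd
    match m, s with
    | 0, _ => omega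
    | m + 1, St.leaf γ => exact absurd hv (by simp [IsValid])
    | m + 1, St.node l =>
      obtain ⟨hne, hmem⟩ := hv
      have hlast : l.getLastD (St.node []) = l.getLast hne := by
        rw [List.getLastD_eq_getLast?, List.getLast?_eq_getLast hne]; rfl
      set t := l.getLastD (St.node []) with hts
      have htmem : t ∈ l := by rw [hlast]; exact List.getLast_mem hne
      have hvt : IsValid m t := hmem t htmem
      obtain ⟨u, hu, hvu, hlen⟩ := ih m t hvt (by omega)
      have hget : l[l.length - 1]? = some t := by
        rw [hlast, ← List.getLast?_eq_getLast hne, List.getLast?_eq_getElem?]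
      refine ⟨u, ?_, ?_, ?_⟩
      · rw [topAddr_node, sub?_node, hget, Option.bind_some, ← hts, hu]
      · simpa [Nat.succ_sub_succ] using hvu
      · rw [topAddr_node, ← hts]; simp [hlen]

theorem topAddr_length {m : ℕ} {s : St Γ} (hv : IsValid m s) {d : ℕ} (hd : d ≤ m) :
    (topAddr s d).length = d := by
  obtain ⟨u, -, -, hlen⟩ := topAddr_spec d m s hv hd
  exact hlen

theorem topAddr_append : ∀ (d e m : ℕ) (s u : St Γ), IsValid m s → d ≤ e → e ≤ m →
    sub? s (topAddr s d) = some u → topAddr s e = topAddr s d ++ topAddr u (e - d) := by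
  intro d
  induction d with
  | zero =>
    intro e m s u _ _ _ hu
    rw [topAddr_zero] at hu ⊢
    rw [sub?_nil] at hu
    cases Option.some.inj hu
    simp
  | succ d ih =>
    intro e m s u hv hde hem hu
    match m, s with
    | 0, _ => omega
    | m + 1, St.leaf γ => exact absurd hv (by simp [IsValid])
    | m + 1, St.node l =>
      obtain ⟨hne, hmem⟩ := hv
      match e with
      | 0 => omega
      | e + 1 =>
        have hlast : l.getLastD (St.node []) = l.getLast hne := by
          rw [List.getLastD_eq_getLast?, List.getLast?_eq_getLast hne]; rfl
        set t := l.getLastD (St.node []) with hts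
        have htmem : t ∈ l := by rw [hlast]; exact List.getLast_mem hne
        have hvt : IsValid m t := hmem t htmem
        have hget : l[l.length - 1]? = some t := by
          rw [hlast, ← List.getLast?_eq_getLast hne, List.getLast?_eq_getElem?]
        rw [topAddr_node, sub?_node, hget, Option.bind_some] at hu
        rw [topAddr_node, topAddr_node, ← hts]
        rw [ih e m t u hvt (by omega) (by omega) hu]
        simp [Nat.succ_sub_succ]

theorem topAddr_snoc {m : ℕ} {s : St Γ} (hv : IsValid m s) {d : ℕ} (hd : d < m) :
    topAddr s (d + 1) = topAddr s d ++ [sizeAt s (topAddr s d) - 1] := by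
  obtain ⟨u, hu, hvu, hlen⟩ := topAddr_spec d m s hv (by omega)
  have : 1 ≤ m - d := by omega
  match hmd : m - d, u with
  | 0, _ => omega
  | m' + 1, St.leaf γ => rw [hmd] at hvu; exact absurd hvu (by simp [IsValid])
  | m' + 1, St.node lu =>
    rw [hmd] at hvu
    obtain ⟨hne, _⟩ := hvu
    rw [topAddr_append d (d+1) m s (St.node lu) hv (by omega) (by omega) hu]
    rw [sizeAt_of_sub hu]
    congr 1
    have : (d + 1) - d = 1 := by omega
    rw [this, topAddr_node, topAddr_zero]

theorem topAddr_take {m : ℕ} {s : St Γ} (hv : IsValid m s) {d e : ℕ} (hde : d ≤ e)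
    (hem : e ≤ m) : (topAddr s e).take d = topAddr s d := by
  obtain ⟨u, hu, _, hlen⟩ := topAddr_spec d m s hv (by omega)
  rw [topAddr_append d e m s u hv hde hem hu, List.take_left' hlen]

theorem topAddr_prefix {m : ℕ} {s : St Γ} (hv : IsValid m s) {d e : ℕ} (hde : d ≤ e)
    (hem : e ≤ m) : topAddr s d <+: topAddr s e :=
  ⟨(topAddr s e).drop d, by rw [← topAddr_take hv hde hem, List.take_append_drop]⟩

theorem sizeAt_top_pos {m : ℕ} {s : St Γ} (hv : IsValid m s) {d : ℕ} (hd : d < m) :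
    1 ≤ sizeAt s (topAddr s d) := by
  obtain ⟨u, hu, hvu, _⟩ := topAddr_spec d m s hv (by omega)
  match hmd : m - d, u with
  | 0, _ => omega
  | m' + 1, St.leaf γ => rw [hmd] at hvu; exact absurd hvu (by simp [IsValid])
  | m' + 1, St.node lu =>
    rw [hmd] at hvu
    obtain ⟨hne, _⟩ := hvu
    rw [sizeAt_of_sub hu]
    exact List.length_pos_iff.mpr hne

theorem topAddr_getElem {m : ℕ} {s : St Γ} (hv : IsValid m s) {d e : ℕ} (hde : d < e)
    (hem : e ≤ m) :
    (topAddr s e)[d]? = some (sizeAt s (topAddr s d) - 1) := by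
  have h1 : (topAddr s (d+1)).length = d + 1 := topAddr_length hv (by omega)
  have hdlen : (topAddr s d).length = d := topAddr_length hv (by omega)
  obtain ⟨u, hu, -, -⟩ := topAddr_spec (d+1) m s hv (by omega)
  rw [topAddr_append (d+1) e m s u hv (by omega) hem hu]
  rw [List.getElem?_append, if_pos (by rw [h1]; omega)]
  rw [topAddr_snoc hv (show d < m by omega)]
  rw [List.getElem?_append, if_neg (by rw [hdlen]; omega)]
  rw [hdlen]
  simp

/-- The spine below the modification point of a `modAt` at a spine address is unchanged. -/
theorem modAt_topAddr_spine {n : ℕ} {s s' : St Γ} {F : St Γ → Option (St Γ)} {c : ℕ}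
    (hv : IsValid n s) (hv' : IsValid n s') (hc : c ≤ n)
    (h : modAt s (topAddr s c) F = some s') :
    ∀ d, d ≤ c → topAddr s' d = topAddr s d := by
  intro d
  induction d with
  | zero => intro _; rw [topAddr_zero, topAddr_zero]
  | succ d ih =>
    intro hdc
    have hih := ih (by omega)
    rw [topAddr_snoc hv' (by omega), topAddr_snoc hv (by omega), hih]
    have hpre : topAddr s d <+: topAddr s c := topAddr_prefix hv (by omega) hc
    have hne : topAddr s d ≠ topAddr s c := by
      apply ne_of_length_ne
      rw [topAddr_length hv (by omega), topAddr_length hv hc]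
      omega
    obtain ⟨l, l', h1, h2, h3⟩ := modAt_prefix _ _ _ _ h _ hpre hne
    rw [sizeAt_of_sub h1, sizeAt_of_sub h2, h3]

end TopAddr

section OpAnatomy

variable {Γ : Type} {n r : ℕ} {s s' : St Γ}

theorem pop_pack (hv : IsValid n s) (hr1 : 1 ≤ r) (hrn : r ≤ n)
    (h : popOp n r s = some s') :
    ∃ lst : List (St Γ), sub? s (topAddr s (n-r)) = some (St.node lst) ∧ 2 ≤ lst.length ∧
      sub? s' (topAddr s (n-r)) = some (St.node lst.dropLast) ∧
      IsValid n s' ∧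
      (∀ d, d ≤ n - r → topAddr s' d = topAddr s d) ∧
      (∀ p, (sub? s' p).isSome → (sub? s p).isSome) ∧
      (∀ p, p ≠ topAddr s (n-r) → (sub? s' p).isSome → sizeAt s p = sizeAt s' p) := by
  obtain ⟨u, u', hsub, hF, hsub'⟩ := modAt_self _ _ _ _ h
  set α := topAddr s (n-r) with hα
  have hαlen : α.length = n - r := topAddr_length hv (by omega)
  match u with
  | St.leaf γ => exact absurd hF (by simp [popStk])
  | St.node lst =>
    have hlen2 : 2 ≤ lst.length := by
      by_contra hc
      rw [popStk, if_neg hc] at hF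
      simp at hF
    rw [popStk, if_pos hlen2] at hF
    cases Option.some.inj hF
    have hvalid' : IsValid n s' := by
      refine modAt_isValid _ _ _ _ _ hv h ?_
      intro w w' hw hFw hvw
      rw [← hα, hsub] at hw
      cases Option.some.inj hw
      rw [popStk, if_pos hlen2] at hFw
      cases Option.some.inj hFw
      rw [hαlen] at hvw ⊢
      match hnr : n - (n - r), hvw with
      | 0, hvw => exact absurd hvw (by simp [IsValid])
      | r' + 1, ⟨hne, hmem⟩ =>
        refine ⟨?_, ?_⟩
        · have : lst.dropLast.length = lst.length - 1 := List.length_dropLast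
          intro hc
          rw [hc] at this
          simp at this
          omega
        · intro v hvmem
          exact hmem v (List.mem_of_mem_dropLast hvmem)
    refine ⟨lst, hsub, hlen2, hsub', hvalid', ?_, ?_, ?_⟩
    · intro d hd
      exact modAt_topAddr_spine hv hvalid' (by omega) h d hd
    all_goals {
      intro p
      have tri : p = α ∨ (p <+: α ∧ p ≠ α) ∨ α <+: p ∨ (¬ p <+: α ∧ ¬ α <+: p) := by
        by_cases h1 : p = α
        · tauto
        · by_cases h2 : p <+: α
          · tauto
          · tauto
      first
      | -- the backward-validity goal
        (intro hp
         rcases tri with rfl | ⟨hpre, hne⟩ | hext | ⟨h1, h2⟩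
         · rw [hsub]; rfl
         · obtain ⟨l₁, l₂, hb1, hb2, hb3⟩ := modAt_prefix _ _ _ _ h p (hα ▸ hpre) (hα ▸ hne)
           rw [hb1]; rfl
         · obtain ⟨ρ, rfl⟩ := hext
           match ρ with
           | [] => rw [List.append_nil] at *; rw [hsub]; rfl
           | j :: ρ' =>
             rw [sub?_append, hsub', Option.bind_some, sub?_node] at hp
             rw [sub?_append, hsub, Option.bind_some, sub?_node]
             cases hg : lst.dropLast[j]? with
             | none => rw [hg] at hp; simp at hp
             | some v =>
               have hjlen : j < lst.dropLast.length := (List.getElem?_eq_some_iff.mp hg).1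
               have hg2 : lst[j]? = some v := by
                 rw [List.dropLast_eq_take, List.getElem?_take] at hg
                 rw [List.length_dropLast] at hjlen
                 rwa [if_pos (by omega)] at hg
               rw [hg2]
               rw [hg] at hp
               exact hp
         · rw [← modAt_stable _ _ _ _ h p (hα ▸ h1) (hα ▸ h2)]
           exact hp)
      | -- the size-preservation goal
        (intro hne hp
         rcases tri with rfl | ⟨hpre, hne'⟩ | hext | ⟨h1, h2⟩
         · exact absurd rfl hne
         · obtain ⟨l₁, l₂, hb1, hb2, hb3⟩ := modAt_prefix _ _ _ _ h p (hα ▸ hpre) (hα ▸ hne')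
           rw [sizeAt_of_sub hb1, sizeAt_of_sub hb2, hb3]
         · obtain ⟨ρ, rfl⟩ := hext
           match ρ with
           | [] => rw [List.append_nil] at hne; exact absurd rfl hne
           | j :: ρ' =>
             rw [sub?_append, hsub', Option.bind_some, sub?_node] at hp
             have : sub? s' (α ++ j :: ρ') = sub? s (α ++ j :: ρ') := by
               rw [sub?_append, hsub', Option.bind_some, sub?_node]
               rw [sub?_append, hsub, Option.bind_some, sub?_node]
               cases hg : lst.dropLast[j]? with
               | none => rw [hg] at hp; simp at hp
               | some v =>
                 have hjlen : j < lst.dropLast.length := (List.getElem?_eq_some_iff.mp hg).1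
                 have hg2 : lst[j]? = some v := by
                   rw [List.dropLast_eq_take, List.getElem?_take] at hg
                   rw [List.length_dropLast] at hjlen
                   rwa [if_pos (by omega)] at hg
                 rw [hg2]
             rw [sizeAt, sizeAt, this]
         · rw [sizeAt, sizeAt, modAt_stable _ _ _ _ h p (hα ▸ h1) (hα ▸ h2)])
    }

theorem push_pack {γ : Γ} (hv : IsValid n s) (hr1 : 1 ≤ r) (hrn : r ≤ n)
    (h : pushOp n r γ s = some s') :
    ∃ (l : List (St Γ)) (t t' : St Γ),
      sub? s (topAddr s (n-r)) = some (St.node l) ∧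
      1 ≤ l.length ∧
      l[l.length - 1]? = some t ∧ SameSh t t' ∧
      sub? s' (topAddr s (n-r)) = some (St.node (l ++ [t'])) ∧
      IsValid n s' := by
  obtain ⟨u, u', hsub, hF, hsub'⟩ := modAt_self _ _ _ _ h
  have hF0 := hF
  have hαlen : (topAddr s (n-r)).length = n - r := topAddr_length hv (by omega)
  match u with
  | St.leaf γ₀ => exact absurd hF (by simp [dupTop])
  | St.node l =>
    unfold dupTop at hF
    split at hF
    next l2 heq =>
      injection heq with hleq
      subst hleq
      split at hF
      next => exact absurd hF (by simp)
      next t hlast =>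
        split at hF
        next => exact absurd hF (by simp)
        next t' hmod =>
          cases Option.some.inj hF
          have hss : SameSh t t' := by
            refine modAt_shape_sameSh ?_ _ t t' hmod
            intro w w' hx
            cases w with
            | leaf g =>
              have hx' : some (St.leaf γ) = some w' := hx
              cases Option.some.inj hx'
              exact .leaf g γ
            | node l₀ =>
              have hx' : (none : Option (St Γ)) = some w' := hx
              simp at hx'
          have hlget : l[l.length - 1]? = some t := by
            rw [← List.getLast?_eq_getElem?]; exact hlast
          have hlpos : 1 ≤ l.length := by
            have := (List.getElem?_eq_some_iff.mp hlget).1; omega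
          have htmem : t ∈ l := List.mem_of_getElem? hlget
          have hvalid' : IsValid n s' := by
            refine modAt_isValid _ _ _ _ _ hv h ?_
            intro w w' hw hFw hvw
            rw [hsub] at hw
            cases Option.some.inj hw
            rw [hF0] at hFw
            cases Option.some.inj hFw
            rw [hαlen] at hvw ⊢
            match hnr : n - (n - r), hvw with
            | 0, hvw => exact absurd hvw (by simp [IsValid])
            | r' + 1, ⟨hne, hmem⟩ =>
              refine ⟨by simp, ?_⟩
              intro v hvmem
              rcases List.mem_append.mp hvmem with hvl | hvt'
              · exact hmem v hvl
              · have : v = t' := by simpa using hvt'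
                subst this
                exact hss.isValid r' (hmem t htmem)
          exact ⟨l, t, t', hsub, hlpos, hlget, hss, hsub', hvalid'⟩
    next g heq => exact absurd hF (by simp)

end OpAnatomy

section PushFacts

variable {Γ : Type} {n r : ℕ} {γ : Γ} {s s' : St Γ} {l : List (St Γ)} {t t' : St Γ}

theorem push_sub_new (hsub' : sub? s' (topAddr s (n-r)) = some (St.node (l ++ [t'])))
    (ρ : List ℕ) : sub? s' (topAddr s (n-r) ++ l.length :: ρ) = sub? t' ρ := by
  rw [sub?_append, hsub', Option.bind_some, sub?_node,
    List.getElem?_append_right (by omega)]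
  simp

theorem push_sub_old (hlpos : 1 ≤ l.length) (hlget : l[l.length - 1]? = some t)
    (hsub : sub? s (topAddr s (n-r)) = some (St.node l))
    (hsub' : sub? s' (topAddr s (n-r)) = some (St.node (l ++ [t'])))
    (ρ : List ℕ) :
    sub? s (topAddr s (n-r) ++ (l.length - 1) :: ρ) = sub? t ρ ∧
    sub? s' (topAddr s (n-r) ++ (l.length - 1) :: ρ) = sub? t ρ := by
  constructor
  · rw [sub?_append, hsub, Option.bind_some, sub?_node, hlget, Option.bind_some]
  · rw [sub?_append, hsub', Option.bind_some, sub?_node,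
      List.getElem?_append, if_pos (by omega), hlget, Option.bind_some]

theorem push_topAddr (hv : IsValid n s) (hv' : IsValid n s')
    (hr1 : 1 ≤ r) (hrn : r ≤ n)
    (hpush : pushOp n r γ s = some s')
    (hlpos : 1 ≤ l.length) (hlget : l[l.length - 1]? = some t)
    (hss : SameSh t t')
    (hsub : sub? s (topAddr s (n-r)) = some (St.node l))
    (hsub' : sub? s' (topAddr s (n-r)) = some (St.node (l ++ [t'])))
    {e : ℕ} (he1 : n - r < e) (he2 : e ≤ n) :
    topAddr s e = topAddr s (n-r) ++ (l.length - 1) :: topAddr t (e - (n-r) - 1) ∧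
    topAddr s' e = topAddr s (n-r) ++ l.length :: topAddr t (e - (n-r) - 1) := by
  have hmn : n - r < n := by omega
  have hspine : ∀ d, d ≤ n - r → topAddr s' d = topAddr s d :=
    modAt_topAddr_spine hv hv' (by omega) hpush
  constructor
  · have h1 : topAddr s (n - r + 1) = topAddr s (n-r) ++ [l.length - 1] := by
      rw [topAddr_snoc hv hmn, sizeAt_of_sub hsub]
    have h2 : sub? s (topAddr s (n - r + 1)) = some t := by
      rw [h1]
      have := (push_sub_old hlpos hlget hsub hsub' []).1
      simpa [sub?_nil] using this
    rw [topAddr_append (n - r + 1) e n s t hv (by omega) he2 h2, h1]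
    have : e - (n - r + 1) = e - (n-r) - 1 := by omega
    rw [this, List.append_assoc]
    rfl
  · have h1 : topAddr s' (n - r + 1) = topAddr s (n-r) ++ [l.length] := by
      rw [topAddr_snoc hv' hmn, hspine (n-r) le_rfl, sizeAt_of_sub hsub']
      simp
    have h2 : sub? s' (topAddr s' (n - r + 1)) = some t' := by
      rw [h1]
      have := push_sub_new hsub' []
      simpa [sub?_nil] using this
    rw [topAddr_append (n - r + 1) e n s' t' hv' (by omega) he2 h2, h1]
    have h3 : e - (n - r + 1) = e - (n-r) - 1 := by omega
    rw [h3, List.append_assoc, ← hss.topAddr_eq]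
    rfl

theorem push_untouched (hv : IsValid n s)
    (hpush : pushOp n r γ s = some s')
    (hrn : r ≤ n)
    (hsub : sub? s (topAddr s (n-r)) = some (St.node l))
    (hsub' : sub? s' (topAddr s (n-r)) = some (St.node (l ++ [t'])))
    (p : List ℕ) (hne : p ≠ topAddr s (n-r))
    (hnm : p.take (n - r + 1) ≠ topAddr s (n-r) ++ [l.length])
    (hp : (sub? s' p).isSome) :
    (sub? s p).isSome ∧ sizeAt s p = sizeAt s' p := by
  set α := topAddr s (n-r) with hα
  have hαlen : α.length = n - r := topAddr_length hv (by omega)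
  have tri : (p <+: α ∧ p ≠ α) ∨ α <+: p ∨ (¬ p <+: α ∧ ¬ α <+: p) := by
    by_cases h1 : p <+: α
    · tauto
    · tauto
  rcases tri with ⟨hpre, hne'⟩ | hext | ⟨h1, h2⟩
  · obtain ⟨l₁, l₂, hb1, hb2, hb3⟩ := modAt_prefix _ _ _ _ hpush p hpre hne'
    rw [sizeAt_of_sub hb1, sizeAt_of_sub hb2, hb1, hb3]
    simp
  · obtain ⟨ρ, rfl⟩ := hext
    match ρ with
    | [] => rw [List.append_nil] at hne; exact absurd rfl hne
    | j :: ρ' =>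
      have hpj : ((l ++ [t'])[j]?.bind fun u => sub? u ρ').isSome := by
        rw [sub?_append, hsub', Option.bind_some, sub?_node] at hp
        exact hp
      cases hg : (l ++ [t'])[j]? with
      | none => rw [hg] at hpj; simp at hpj
      | some v =>
        have hjlen : j < l.length + 1 := by
          have := (List.getElem?_eq_some_iff.mp hg).1
          simpa using this
        have hjne : j ≠ l.length := by
          intro hc
          subst hc
          apply hnm
          rw [← hαlen, take_append_cons]
        have hjlt : j < l.length := by omega
        have hg2 : l[j]? = some v := by
          rwa [List.getElem?_append, if_pos hjlt] at hg
        have heq : sub? s' (α ++ j :: ρ') = sub? s (α ++ j :: ρ') := by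
          rw [sub?_append, sub?_append, hsub, hsub']
          simp only [Option.bind_some]
          rw [sub?_node, sub?_node, hg, hg2]
        refine ⟨?_, ?_⟩
        · rw [← heq]; exact hp
        · rw [sizeAt, sizeAt, heq]
  · rw [modAt_stable _ _ _ _ hpush p h1 h2] at hp
    refine ⟨hp, ?_⟩
    rw [sizeAt, sizeAt, modAt_stable _ _ _ _ hpush p h1 h2]

end PushFacts

section RunBasic

theorem down_ind (P : ℕ → Prop) (j l : ℕ) (h0 : P l)
    (hs : ∀ i, j ≤ i → i < l → P (i+1) → P i) : ∀ i, j ≤ i → i ≤ l → P i := by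
  have key : ∀ d i, j ≤ i → i ≤ l → l - i = d → P i := by
    intro d
    induction d with
    | zero =>
      intro i h1 h2 h3
      have : i = l := by omega
      subst this
      exact h0
    | succ d ih =>
      intro i h1 h2 h3
      exact hs i h1 (by omega) (ih (i+1) (by omega) (by omega) (by omega))
  intro i h1 h2
  exact key (l - i) i h1 h2 rfl

theorem histStep_pop {Γ : Type} (n k : ℕ) (s : St Γ) (p : List ℕ) :
    histStep n (Op.pop k) s p = p := rfl

theorem histStep_push {Γ : Type} (n r : ℕ) (γ : Γ) (s : St Γ) (p : List ℕ) :
    histStep n (Op.push r γ) s p =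
      if p.take (n - r + 1) = topAddr s (n-r) ++ [sizeAt s (topAddr s (n-r))]
      then p.set (n-r) (sizeAt s (topAddr s (n-r)) - 1) else p := rfl

variable {n : ℕ} {A Γ : Type} {D : DPDA n A Γ} {R : Run D}

/-- The one-step history function of a configuration. -/
def hfun (D : DPDA n A Γ) (c : D.Q × St Γ) : List ℕ → List ℕ :=
  match topLeaf? n c.2 with
  | none => id
  | some γ =>
      match D.δ c.1 γ with
      | Trans.read _ => id
      | Trans.op _ o => histStep n o c.2

theorem stepHist_eq_hfun (R : Run D) (i : ℕ) : R.stepHist i = hfun D (R.cfg i) := rfl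

theorem step_char {c c' : D.Q × St Γ} {o : Option A} (h : Step D c o c') :
    IsValid n c.2 ∧
      ((hfun D c = id ∧ c'.2 = c.2) ∨
        ∃ op, hfun D c = histStep n op c.2 ∧ applyOp n op c.2 = some c'.2) := by
  cases h with
  | read a hval htop hδ =>
    refine ⟨hval, Or.inl ⟨?_, rfl⟩⟩
    simp only [hfun, htop, hδ]
  | op hval htop hδ happ =>
    rename_i q s s' γ q' op
    refine ⟨hval, Or.inr ⟨op, ?_, happ⟩⟩
    simp only [hfun, htop, hδ]

theorem applyOp_pop_elim {Γ' : Type} {k' : ℕ} {s s' : St Γ'}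
    (h : applyOp n (Op.pop k') s = some s') :
    1 ≤ k' ∧ k' ≤ n ∧ popOp n k' s = some s' := by
  have he : applyOp n (Op.pop k') s = if 1 ≤ k' ∧ k' ≤ n then popOp n k' s else none := rfl
  rw [he] at h
  by_cases hg : 1 ≤ k' ∧ k' ≤ n
  · rw [if_pos hg] at h; exact ⟨hg.1, hg.2, h⟩
  · rw [if_neg hg] at h; simp at h

theorem applyOp_push_elim {Γ' : Type} {k' : ℕ} {γ : Γ'} {s s' : St Γ'}
    (h : applyOp n (Op.push k' γ) s = some s') :
    1 ≤ k' ∧ k' ≤ n ∧ pushOp n k' γ s = some s' := by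
  have he : applyOp n (Op.push k' γ) s = if 1 ≤ k' ∧ k' ≤ n then pushOp n k' γ s else none := rfl
  rw [he] at h
  by_cases hg : 1 ≤ k' ∧ k' ≤ n
  · rw [if_pos hg] at h; exact ⟨hg.1, hg.2, h⟩
  · rw [if_neg hg] at h; simp at h

theorem step_valid' {c c' : D.Q × St Γ} {o : Option A} (h : Step D c o c') :
    IsValid n c'.2 := by
  obtain ⟨hv, hcase⟩ := step_char h
  rcases hcase with ⟨-, he⟩ | ⟨op, -, happ⟩
  · rwa [he]
  · cases op with
    | pop k' =>
      obtain ⟨h1, h2, h3⟩ := applyOp_pop_elim happ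
      obtain ⟨-, -, -, -, hval, -⟩ := pop_pack hv h1 h2 h3
      exact hval
    | push k' g =>
      obtain ⟨h1, h2, h3⟩ := applyOp_push_elim happ
      obtain ⟨-, -, -, -, -, -, -, -, hval⟩ := push_pack hv h1 h2 h3
      exact hval

theorem run_valid (hpos : 0 < R.len) : ∀ i ≤ R.len, IsValid n (R.cfg i).2 := by
  intro i hi
  rcases lt_or_eq_of_le hi with hlt | rfl
  · exact (step_char (R.ok i hlt)).1
  · have := step_valid' (R.ok (R.len - 1) (by omega))
    rwa [Nat.sub_add_cancel hpos] at this

theorem histTo_zero (i : ℕ) (p : List ℕ) : R.histTo i 0 p = p := rfl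

theorem histTo_succ (i j : ℕ) (p : List ℕ) :
    R.histTo i (j+1) p = if j + 1 ≤ i then p else R.histTo i j (R.stepHist j p) := rfl

theorem histTo_of_le {i j : ℕ} (h : j ≤ i) (p : List ℕ) : R.histTo i j p = p := by
  induction j generalizing p with
  | zero => rfl
  | succ j ih => rw [histTo_succ, if_pos h]

theorem histTo_comp {i j l : ℕ} (hij : i ≤ j) (hjl : j ≤ l) (p : List ℕ) :
    R.histTo i l p = R.histTo i j (R.histTo j l p) := by
  induction l generalizing p with
  | zero =>
    have hj : j = 0 := by omega
    subst hj
    simp only [histTo_zero]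
  | succ l ih =>
    by_cases hj : j = l + 1
    · subst hj
      rw [histTo_of_le le_rfl]
    · have hjl' : j ≤ l := by omega
      rw [histTo_succ, if_neg (by omega), histTo_succ j, if_neg (by omega)]
      exact ih hjl' _

theorem histTo_step {i l : ℕ} (h : i < l) (p : List ℕ) :
    R.histTo i l p = R.stepHist i (R.histTo (i+1) l p) := by
  rw [histTo_comp (Nat.le_succ i) (by omega) p, histTo_succ, if_neg (by omega),
    histTo_of_le le_rfl]

theorem histTo_sub (i L : ℕ) : ∀ (d : ℕ) (p : List ℕ),
    (R.sub i L).histTo 0 d p = R.histTo i (i + d) p := by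
  intro d
  induction d with
  | zero =>
    intro p
    rw [histTo_zero, Nat.add_zero, histTo_of_le le_rfl]
  | succ d ih =>
    intro p
    rw [histTo_succ, if_neg (by omega)]
    have hsh : (R.sub i L).stepHist d = R.stepHist (i + d) := rfl
    rw [hsh, ih]
    rw [show i + (d+1) = (i + d) + 1 from rfl, histTo_succ, if_neg (by omega)]

end RunBasic

section StepFacts

theorem histStep_push_take {Γ : Type} {n r : ℕ} {s : St Γ} (hv : IsValid n s) (hrn : r ≤ n)
    (γ : Γ) (p : List ℕ) (d : ℕ) :
    (histStep n (Op.push r γ) s p).take d = histStep n (Op.push r γ) s (p.take d) := by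
  set m := n - r with hm
  set ta := topAddr s m with hta
  set sz := sizeAt s ta with hsz
  have hlen : ta.length = m := topAddr_length hv (by omega)
  rw [histStep_push, histStep_push, ← hm, ← hta, ← hsz]
  by_cases hmatch : p.take (m+1) = ta ++ [sz]
  · rw [if_pos hmatch]
    have hplen : m + 1 ≤ p.length := by
      have := congrArg List.length hmatch
      simp only [List.length_take, List.length_append, hlen, List.length_cons,
        List.length_nil] at this
      omega
    by_cases hd : d ≤ m
    · rw [take_set_of_le _ _ _ hd, if_neg ?_]
      intro hc
      have := congrArg List.length hc
      simp only [List.length_take, List.length_append, hlen, List.length_cons,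
        List.length_nil] at this
      omega
    · push_neg at hd
      rw [if_pos ?_, set_take_comm _ _ hd]
      rw [List.take_take]
      rw [min_eq_left (by omega)]
      exact hmatch
  · rw [if_neg hmatch, if_neg ?_]
    intro hc
    by_cases hd : d ≤ m
    · have := congrArg List.length hc
      simp only [List.length_take, List.length_append, hlen, List.length_cons,
        List.length_nil] at this
      omega
    · rw [List.take_take, min_eq_left (by omega)] at hc
      exact hmatch hc

theorem histStep_length {Γ : Type} {n : ℕ} (o : Op Γ) (s : St Γ) (p : List ℕ) :
    (histStep n o s p).length = p.length := by
  cases o with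
  | pop k => rfl
  | push r γ =>
    rw [histStep_push]
    split
    · rw [List.length_set]
    · rfl

variable {n : ℕ} {A Γ : Type} {D : DPDA n A Γ} {R : Run D}

theorem stepHist_length {i : ℕ} (hi : i < R.len) (p : List ℕ) :
    (R.stepHist i p).length = p.length := by
  rw [stepHist_eq_hfun]
  rcases (step_char (R.ok i hi)).2 with ⟨hid, -⟩ | ⟨op, hh, -⟩
  · rw [hid]; rfl
  · rw [hh, histStep_length]

theorem stepHist_take {i : ℕ} (hi : i < R.len) (p : List ℕ) (d : ℕ) :
    (R.stepHist i p).take d = R.stepHist i (p.take d) := by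
  obtain ⟨hv, hcase⟩ := step_char (R.ok i hi)
  rw [stepHist_eq_hfun]
  rcases hcase with ⟨hid, -⟩ | ⟨op, hh, happ⟩
  · rw [hid]; rfl
  · rw [hh]
    cases op with
    | pop k => rfl
    | push r γ =>
      obtain ⟨h1, h2, -⟩ := applyOp_push_elim happ
      exact histStep_push_take hv h2 γ p d

theorem stepHist_valid {i : ℕ} (hi : i < R.len) (p : List ℕ)
    (hp : (sub? (R.cfg (i+1)).2 p).isSome) :
    (sub? (R.cfg i).2 (R.stepHist i p)).isSome := by
  obtain ⟨hv, hcase⟩ := step_char (R.ok i hi)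
  rw [stepHist_eq_hfun]
  rcases hcase with ⟨hid, hsame⟩ | ⟨op, hh, happ⟩
  · rw [hid]
    rw [hsame] at hp
    exact hp
  · rw [hh]
    cases op with
    | pop k' =>
      obtain ⟨h1, h2, h3⟩ := applyOp_pop_elim happ
      obtain ⟨lst, hsub, hlen2, hsub', hval', hspine, hback, hsize⟩ := pop_pack hv h1 h2 h3
      rw [histStep_pop]
      exact hback p hp
    | push r γ =>
      obtain ⟨h1, h2, h3⟩ := applyOp_push_elim happ
      obtain ⟨l, t, t', hsub, hlpos, hlget, hss, hsub', hval'⟩ := push_pack hv h1 h2 h3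
      set s := (R.cfg i).2
      set s' := (R.cfg (i+1)).2
      set m := n - r with hm
      set ta := topAddr s m with hta
      have hszeq : sizeAt s ta = l.length := sizeAt_of_sub hsub
      have hlen : ta.length = m := topAddr_length hv (by omega)
      rw [histStep_push, ← hm, ← hta, hszeq]
      by_cases hmatch : p.take (m+1) = ta ++ [l.length]
      · rw [if_pos hmatch]
        have hpsplit : p = ta ++ l.length :: p.drop (m+1) := by
          conv_lhs => rw [← List.take_append_drop (m+1) p]
          rw [hmatch, List.append_assoc]
          rfl
        rw [hpsplit, ← hlen, set_append_len, hlen]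
        have hold := (push_sub_old hlpos hlget hsub hsub' (p.drop (m+1))).1
        rw [← hta] at hold
        rw [hold]
        rw [hpsplit] at hp
        have hnew := push_sub_new hsub'  (p.drop (m+1))
        rw [← hta] at hnew
        rw [hnew] at hp
        rw [hss.sub?_isSome]
        exact hp
      · rw [if_neg hmatch]
        by_cases hpta : p = ta
        · rw [hpta, hsub]; rfl
        · exact (push_untouched hv h3 h2 hsub hsub' p hpta hmatch hp).1

theorem stepHist_mono {i : ℕ} (hi : i < R.len) (w : List ℕ) (x x' : ℕ) (hxx : x ≤ x')
    (hp1 : (sub? (R.cfg (i+1)).2 (w ++ [x])).isSome)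
    (hp2 : (sub? (R.cfg (i+1)).2 (w ++ [x'])).isSome) :
    ∃ v y y', R.stepHist i (w ++ [x]) = v ++ [y] ∧ R.stepHist i (w ++ [x']) = v ++ [y'] ∧
      y ≤ y' ∧ y' - y ≤ x' - x := by
  obtain ⟨hv, hcase⟩ := step_char (R.ok i hi)
  rw [stepHist_eq_hfun]
  rcases hcase with ⟨hid, hsame⟩ | ⟨op, hh, happ⟩
  · rw [hid]
    exact ⟨w, x, x', rfl, rfl, hxx, by omega⟩
  · rw [hh]
    cases op with
    | pop k' => exact ⟨w, x, x', rfl, rfl, hxx, by omega⟩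
    | push r γ =>
      obtain ⟨h1, h2, h3⟩ := applyOp_push_elim happ
      obtain ⟨l, t, t', hsub, hlpos, hlget, hss, hsub', hval'⟩ := push_pack hv h1 h2 h3
      set s := (R.cfg i).2
      set s' := (R.cfg (i+1)).2
      set m := n - r with hm
      set ta := topAddr s m with hta
      have hszeq : sizeAt s ta = l.length := sizeAt_of_sub hsub
      set sz := l.length with hszdef
      have hlen : ta.length = m := topAddr_length hv (by omega)
      rw [histStep_push, histStep_push, ← hm, ← hta, hszeq]
      rcases Nat.lt_trichotomy w.length m with hL | hL | hL
      · -- both unmatched: lengths too short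
        have hu1 : (w ++ [x]).take (m+1) ≠ ta ++ [sz] := by
          intro hc
          have := congrArg List.length hc
          simp only [List.length_take, List.length_append, hlen, List.length_cons,
            List.length_nil] at this
          omega
        have hu2 : (w ++ [x']).take (m+1) ≠ ta ++ [sz] := by
          intro hc
          have := congrArg List.length hc
          simp only [List.length_take, List.length_append, hlen, List.length_cons,
            List.length_nil] at this
          omega
        rw [if_neg hu1, if_neg hu2]
        exact ⟨w, x, x', rfl, rfl, hxx, by omega⟩
      · -- w.length = m
        have htk1 : (w ++ [x]).take (m+1) = w ++ [x] :=
          List.take_of_length_le (by simp [hL])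
        have htk2 : (w ++ [x']).take (m+1) = w ++ [x'] :=
          List.take_of_length_le (by simp [hL])
        by_cases hw : w = ta
        · subst hw
          -- bound : x' ≤ sz
          obtain ⟨l₂, hl₂, hxlt⟩ := valid_last hp2
          rw [hsub'] at hl₂
          cases Option.some.inj hl₂
          have hx'le : x' ≤ sz := by
            simp only [List.length_append, List.length_cons, List.length_nil] at hxlt
            omega
          by_cases hx : x = sz
          · subst hx
            have hx' : x' = sz := by omega
            subst hx'
            rw [if_pos (by rw [htk1])]
            rw [← hlen, set_append_len]
            exact ⟨ta, sz - 1, sz - 1, rfl, rfl, le_rfl, by omega⟩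
          · have hm1 : (ta ++ [x]).take (m+1) ≠ ta ++ [sz] := by
              rw [htk1]
              intro hc
              exact hx (by simpa using (List.append_inj hc rfl).2)
            rw [if_neg hm1]
            by_cases hx' : x' = sz
            · subst hx'
              rw [if_pos (by rw [htk2]), ← hlen, set_append_len]
              exact ⟨ta, x, sz - 1, rfl, rfl, by omega, by omega⟩
            · have hm2 : (ta ++ [x']).take (m+1) ≠ ta ++ [sz] := by
                rw [htk2]
                intro hc
                exact hx' (by simpa using (List.append_inj hc rfl).2)
              rw [if_neg hm2]
              exact ⟨ta, x, x', rfl, rfl, hxx, by omega⟩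
        · have hm1 : (w ++ [x]).take (m+1) ≠ ta ++ [sz] := by
            rw [htk1]
            intro hc
            exact hw (List.append_inj hc (by rw [hlen, hL])).1
          have hm2 : (w ++ [x']).take (m+1) ≠ ta ++ [sz] := by
            rw [htk2]
            intro hc
            exact hw (List.append_inj hc (by rw [hlen, hL])).1
          rw [if_neg hm1, if_neg hm2]
          exact ⟨w, x, x', rfl, rfl, hxx, by omega⟩
      · -- m < w.length : takes agree
        have htk : (w ++ [x]).take (m+1) = (w ++ [x']).take (m+1) := by
          rw [List.take_append_of_le_length (by omega), List.take_append_of_le_length (by omega)]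
        by_cases hmatch : (w ++ [x]).take (m+1) = ta ++ [sz]
        · rw [if_pos hmatch, if_pos (by rw [← htk]; exact hmatch)]
          rw [set_append_lt _ _ _ _ (by omega), set_append_lt _ _ _ _ (by omega)]
          exact ⟨w.set m (sz - 1), x, x', rfl, rfl, hxx, by omega⟩
        · rw [if_neg hmatch, if_neg (by rw [← htk]; exact hmatch)]
          exact ⟨w, x, x', rfl, rfl, hxx, by omega⟩

end StepFacts

section RunHist

theorem sizeAt_congr {Γ : Type} {s₁ s₂ : St Γ} {p₁ p₂ : List ℕ}
    (h : sub? s₁ p₁ = sub? s₂ p₂) : sizeAt s₁ p₁ = sizeAt s₂ p₂ := by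
  simp [sizeAt, h]

theorem ne_of_getElem?_ne {l₁ l₂ : List ℕ} {d : ℕ} (h : l₁[d]? ≠ l₂[d]?) : l₁ ≠ l₂ :=
  fun e => h (e ▸ rfl)

variable {n : ℕ} {A Γ : Type} {D : DPDA n A Γ} {R : Run D}

theorem histTo_length {i l : ℕ} (hl : l ≤ R.len) (p : List ℕ) :
    (R.histTo i l p).length = p.length := by
  induction l generalizing p with
  | zero => rfl
  | succ l ih =>
    rw [histTo_succ]
    split
    · rfl
    · rw [ih (by omega), stepHist_length (by omega)]

theorem histTo_take {i l : ℕ} (hl : l ≤ R.len) (p : List ℕ) (d : ℕ) :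
    (R.histTo i l p).take d = R.histTo i l (p.take d) := by
  induction l generalizing p with
  | zero => rfl
  | succ l ih =>
    rw [histTo_succ, histTo_succ]
    split
    · rfl
    · rw [ih (by omega), stepHist_take (by omega)]

theorem histTo_valid {i l : ℕ} (hil : i ≤ l) (hl : l ≤ R.len) (p : List ℕ)
    (hp : (sub? (R.cfg l).2 p).isSome) :
    (sub? (R.cfg i).2 (R.histTo i l p)).isSome := by
  refine down_ind (fun i' => (sub? (R.cfg i').2 (R.histTo i' l p)).isSome) i l ?_ ?_ i le_rfl hil
  · show (sub? (R.cfg l).2 (R.histTo l l p)).isSome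
    rw [histTo_of_le le_rfl]
    exact hp
  · intro i' h1 h2 hP
    rw [histTo_step h2]
    exact stepHist_valid (by omega) _ hP

theorem histTo_mono {i l : ℕ} (hil : i ≤ l) (hl : l ≤ R.len) (w : List ℕ) (x x' : ℕ)
    (hxx : x ≤ x') (hp1 : (sub? (R.cfg l).2 (w ++ [x])).isSome)
    (hp2 : (sub? (R.cfg l).2 (w ++ [x'])).isSome) :
    ∃ v y y', R.histTo i l (w ++ [x]) = v ++ [y] ∧ R.histTo i l (w ++ [x']) = v ++ [y'] ∧
      y ≤ y' ∧ y' - y ≤ x' - x := by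
  refine down_ind (fun i' => ∃ v y y', R.histTo i' l (w ++ [x]) = v ++ [y] ∧
      R.histTo i' l (w ++ [x']) = v ++ [y'] ∧ y ≤ y' ∧ y' - y ≤ x' - x) i l ?_ ?_ i le_rfl hil
  · show ∃ v y y', R.histTo l l (w ++ [x]) = v ++ [y] ∧
      R.histTo l l (w ++ [x']) = v ++ [y'] ∧ y ≤ y' ∧ y' - y ≤ x' - x
    rw [histTo_of_le le_rfl, histTo_of_le le_rfl]
    exact ⟨w, x, x', rfl, rfl, hxx, by omega⟩
  · intro i' h1 h2 hP
    obtain ⟨v, y, y', e1, e2, hyy, hgap⟩ := hP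
    have hv1 : (sub? (R.cfg (i'+1)).2 (v ++ [y])).isSome := by
      rw [← e1]
      exact histTo_valid (by omega) hl _ hp1
    have hv2 : (sub? (R.cfg (i'+1)).2 (v ++ [y'])).isSome := by
      rw [← e2]
      exact histTo_valid (by omega) hl _ hp2
    obtain ⟨v₂, z, z', f1, f2, hzz, hgap2⟩ := stepHist_mono (by omega) v y y' hyy hv1 hv2
    rw [histTo_step h2, histTo_step h2, e1, e2]
    exact ⟨v₂, z, z', f1, f2, hzz, by omega⟩

end RunHist

section MainStep

variable {n : ℕ} {A Γ : Type} {D : DPDA n A Γ} {R : Run D}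

theorem stepHist_main {k : ℕ} (hk1 : 1 ≤ k) (hkn : k ≤ n) {i : ℕ} (hi : i < R.len)
    {P' : List ℕ}
    (hval : (sub? (R.cfg (i+1)).2 P').isSome)
    (hcase : P' = topAddr (R.cfg (i+1)).2 (n - k + 1) ∨
      (∃ w x, P' = w ++ [x] ∧ w.length = n - k ∧ w ≠ topAddr (R.cfg (i+1)).2 (n - k) ∧
        x + 1 = sizeAt (R.cfg (i+1)).2 w)) :
    R.stepHist i P' = topAddr (R.cfg i).2 (n - k + 1) ∨
    R.stepHist i P' = topAddr (R.cfg i).2 (n - k) ++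
      [sizeAt (R.cfg i).2 (topAddr (R.cfg i).2 (n - k)) - 2] ∨
    (∃ w x, R.stepHist i P' = w ++ [x] ∧ w.length = n - k ∧
      w ≠ topAddr (R.cfg i).2 (n - k) ∧ x + 1 = sizeAt (R.cfg i).2 w) := by
  obtain ⟨hv, hchar⟩ := step_char (R.ok i hi)
  have hv' : IsValid n (R.cfg (i+1)).2 := step_valid' (R.ok i hi)
  rw [stepHist_eq_hfun]
  set s := (R.cfg i).2 with hsdef
  set s' := (R.cfg (i+1)).2 with hsdef'
  have han : n - k < n := by omega
  rcases hchar with ⟨hid, hsame⟩ | ⟨op, hh, happ⟩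
  · rw [hid]
    rw [hsame] at hcase
    simp only [id_eq]
    rcases hcase with h | h
    · exact Or.inl h
    · exact Or.inr (Or.inr h)
  · cases op with
    | pop k' =>
      obtain ⟨h1, h2, h3⟩ := applyOp_pop_elim happ
      obtain ⟨lst, hsub, hlen2, hsub', hval2, hspine, hback, hsize⟩ := pop_pack hv h1 h2 h3
      rw [hh, histStep_pop]
      rcases hcase with hC1 | ⟨w, x, hPw, hwlen, hwne, hwsz⟩
      · rcases Nat.lt_trichotomy k' k with hkk | rfl | hkk
        · left
          rw [hC1, hspine (n - k + 1) (by omega)]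
        · right; left
          rw [hC1, topAddr_snoc hv' han, hspine (n - k') le_rfl]
          have hsz' : sizeAt s' (topAddr s (n - k')) = lst.length - 1 := by
            rw [sizeAt_of_sub hsub']
            simp
          have hsz : sizeAt s (topAddr s (n - k')) = lst.length := sizeAt_of_sub hsub
          rw [hsz', hsz]
          have he2 : lst.length - 1 - 1 = lst.length - 2 := by omega
          rw [he2]
        · right; right
          have hnk' : n - k' < n - k := by omega
          refine ⟨topAddr s' (n - k), sizeAt s' (topAddr s' (n - k)) - 1, ?_, ?_, ?_, ?_⟩
          · rw [hC1, topAddr_snoc hv' han]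
          · exact topAddr_length hv' (by omega)
          · apply ne_of_getElem?_ne (d := n - k')
            rw [topAddr_getElem hv' hnk' (by omega), topAddr_getElem hv hnk' (by omega),
              hspine (n - k') le_rfl]
            have e1 : sizeAt s' (topAddr s (n - k')) = lst.length - 1 := by
              rw [sizeAt_of_sub hsub']
              simp
            have e2 : sizeAt s (topAddr s (n - k')) = lst.length := sizeAt_of_sub hsub
            rw [e1, e2]
            intro hc
            have := Option.some.inj hc
            omega
          · have hvalw : (sub? s' (topAddr s' (n - k))).isSome := by
              obtain ⟨u, hu, -, -⟩ := topAddr_spec (n - k) n s' hv' (by omega)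
              rw [hu]
              rfl
            have hwa : topAddr s' (n - k) ≠ topAddr s (n - k') := by
              apply ne_of_length_ne
              rw [topAddr_length hv' (by omega), topAddr_length hv (by omega)]
              omega
            rw [hsize _ hwa hvalw]
            have := sizeAt_top_pos hv' han
            omega
      · right; right
        refine ⟨w, x, hPw, hwlen, ?_, ?_⟩
        · by_cases hkk : k' ≤ k
          · rw [← hspine (n - k) (by omega)]
            exact hwne
          · push_neg at hkk
            intro hc
            have hnk' : n - k' < n - k := by omega
            have hvw : (sub? s' w).isSome := by
              rw [hPw] at hval
              exact isSome_of_append hval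
            have hwtake : w.take (n - k') = topAddr s (n - k') := by
              rw [hc, topAddr_take hv (by omega) (by omega)]
            have hwget : w[n - k']? = some (lst.length - 1) := by
              rw [hc, topAddr_getElem hv hnk' (by omega), sizeAt_of_sub hsub]
            have hwlen2 : n - k' < w.length := by omega
            have hwget' : w[n - k']'hwlen2 = lst.length - 1 :=
              (List.getElem?_eq_some_iff.mp hwget).2
            have hdrop : w.drop (n - k') = (lst.length - 1) :: w.drop (n - k' + 1) := by
              rw [List.drop_eq_getElem_cons hwlen2, hwget']
            have hwdec : w = topAddr s (n - k') ++ (lst.length - 1) :: w.drop (n - k' + 1) := by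
              conv_lhs => rw [← List.take_append_drop (n - k') w]
              rw [hwtake, hdrop]
            rw [hwdec, sub?_append, hsub', Option.bind_some, sub?_node] at hvw
            have hnone : lst.dropLast[lst.length - 1]? = none := by
              rw [List.getElem?_eq_none_iff, List.length_dropLast]
            rw [hnone] at hvw
            simp at hvw
        · have hvw : (sub? s' w).isSome := by
            rw [hPw] at hval
            exact isSome_of_append hval
          have hwa : w ≠ topAddr s (n - k') := by
            by_cases hkk : k' = k
            · subst hkk
              rw [← hspine (n - k') le_rfl]
              exact hwne
            · apply ne_of_length_ne
              rw [hwlen, topAddr_length hv (by omega)]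
              omega
          rw [hsize _ hwa hvw]
          exact hwsz
    | push r γ =>
      obtain ⟨h1, h2, h3⟩ := applyOp_push_elim happ
      obtain ⟨l, t, t', hsub, hlpos, hlget, hss, hsub', hval2⟩ := push_pack hv h1 h2 h3
      have hαlen : (topAddr s (n - r)).length = n - r := topAddr_length hv (by omega)
      have hszeq : sizeAt s (topAddr s (n - r)) = l.length := sizeAt_of_sub hsub
      have hspine : ∀ d, d ≤ n - r → topAddr s' d = topAddr s d :=
        modAt_topAddr_spine hv hv' (by omega) h3
      rw [hh, histStep_push, hszeq]
      rcases hcase with hC1 | ⟨w, x, hPw, hwlen, hwne, hwsz⟩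
      · rcases Nat.lt_trichotomy r k with hrk | rfl | hrk
        · -- r < k
          left
          have e1 : P' = topAddr s (n - k + 1) := by
            rw [hC1, hspine (n - k + 1) (by omega)]
          have hnm : ¬ P'.take (n - r + 1) = topAddr s (n - r) ++ [l.length] := by
            intro hc
            have hlc := congrArg List.length hc
            rw [List.length_take, e1] at hlc
            simp [hαlen, topAddr_length hv (show n - k + 1 ≤ n by omega)] at hlc
            omega
          rw [if_neg hnm, e1]
        · -- r = k
          left
          have hsz' : sizeAt s' (topAddr s (n - r)) = l.length + 1 := by
            rw [sizeAt_of_sub hsub']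
            simp
          have e1 : P' = topAddr s (n - r) ++ [l.length] := by
            rw [hC1, topAddr_snoc hv' (show n - r < n by omega), hspine (n - r) le_rfl, hsz']
            simp
          have hmatch : P'.take (n - r + 1) = topAddr s (n - r) ++ [l.length] := by
            rw [e1]
            exact List.take_of_length_le (by simp [hαlen])
          rw [if_pos hmatch, e1, set_append_len' _ _ _ _ hαlen]
          rw [topAddr_snoc hv (show n - r < n by omega), hszeq]
        · -- r > k
          left
          obtain ⟨hsT, hsT'⟩ := push_topAddr hv hv' h1 h2 h3 hlpos hlget hss hsub hsub'
            (show n - r < n - k + 1 by omega) (show n - k + 1 ≤ n by omega)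
          have hmatch : P'.take (n - r + 1) = topAddr s (n - r) ++ [l.length] := by
            rw [hC1, hsT', take_append_cons' _ _ _ hαlen]
          rw [if_pos hmatch, hC1, hsT', set_append_len' _ _ _ _ hαlen, hsT]
      · rcases Nat.lt_trichotomy r k with hrk | rfl | hrk
        · -- r < k : untouched
          right; right
          have hnm : ¬ P'.take (n - r + 1) = topAddr s (n - r) ++ [l.length] := by
            intro hc
            have hlc := congrArg List.length hc
            rw [List.length_take, hPw] at hlc
            simp [hαlen, hwlen] at hlc
            omega
          rw [if_neg hnm]
          refine ⟨w, x, hPw, hwlen, ?_, ?_⟩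
          · rw [← hspine (n - k) (by omega)]
            exact hwne
          · have hvw : (sub? s' w).isSome := by
              rw [hPw] at hval
              exact isSome_of_append hval
            have hwa : w ≠ topAddr s (n - r) :=
              ne_of_length_ne (by rw [hwlen, hαlen]; omega)
            have hwt : w.take (n - r + 1) ≠ topAddr s (n - r) ++ [l.length] := by
              intro hc
              have hlc := congrArg List.length hc
              rw [List.length_take] at hlc
              simp [hαlen, hwlen] at hlc
              omega
            obtain ⟨-, hsz2⟩ := push_untouched hv h3 h2 hsub hsub' w hwa hwt hvw
            rw [hsz2]
            exact hwsz
        · -- r = k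
          right; right
          have hwa : w ≠ topAddr s (n - r) := by
            intro hc
            apply hwne
            rw [hspine (n - r) le_rfl]
            exact hc
          have hnm : ¬ P'.take (n - r + 1) = topAddr s (n - r) ++ [l.length] := by
            intro hc
            rw [hPw] at hc
            have htk : (w ++ [x]).take (n - r + 1) = w ++ [x] :=
              List.take_of_length_le (by simp [hwlen])
            rw [htk] at hc
            exact hwa (List.append_inj hc (by rw [hwlen, hαlen])).1
          rw [if_neg hnm]
          refine ⟨w, x, hPw, hwlen, hwa, ?_⟩
          have hvw : (sub? s' w).isSome := by
            rw [hPw] at hval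
            exact isSome_of_append hval
          have hwt : w.take (n - r + 1) ≠ topAddr s (n - r) ++ [l.length] := by
            apply ne_of_length_ne
            rw [List.length_take]
            simp [hαlen, hwlen]
          obtain ⟨-, hsz2⟩ := push_untouched hv h3 h2 hsub hsub' w hwa hwt hvw
          rw [hsz2]
          exact hwsz
        · -- r > k
          by_cases hmatch : P'.take (n - r + 1) = topAddr s (n - r) ++ [l.length]
          · right; right
            obtain ⟨hsT, hsT'⟩ := push_topAddr hv hv' h1 h2 h3 hlpos hlget hss hsub hsub'
              (show n - r < n - k by omega) (show n - k ≤ n by omega)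
            have hwtk : w.take (n - r + 1) = topAddr s (n - r) ++ [l.length] := by
              rw [hPw, List.take_append_of_le_length (by rw [hwlen]; omega)] at hmatch
              exact hmatch
            have hwdec : w = topAddr s (n - r) ++ l.length :: w.drop (n - r + 1) := by
              conv_lhs => rw [← List.take_append_drop (n - r + 1) w]
              rw [hwtk, List.append_assoc]
              rfl
            have hPdec : P' = topAddr s (n - r) ++ l.length :: (w.drop (n - r + 1) ++ [x]) := by
              rw [hPw]
              conv_lhs => rw [hwdec]
              simp
            have hset : P'.set (n - r) (l.length - 1) =
                (topAddr s (n - r) ++ (l.length - 1) :: w.drop (n - r + 1)) ++ [x] := by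
              rw [hPdec, set_append_len' _ _ _ _ hαlen]
              simp
            rw [if_pos hmatch, hset]
            refine ⟨topAddr s (n - r) ++ (l.length - 1) :: w.drop (n - r + 1), x, rfl, ?_, ?_, ?_⟩
            · have hlw := congrArg List.length hwdec
              simp only [List.length_append, List.length_cons, hαlen] at hlw
              simp only [List.length_append, List.length_cons, hαlen]
              omega
            · rw [hsT]
              intro hc
              have hρτ : (l.length - 1) :: w.drop (n - r + 1) =
                  (l.length - 1) :: topAddr t (n - k - (n - r) - 1) :=
                (List.append_inj hc rfl).2
              have hρτ' : w.drop (n - r + 1) = topAddr t (n - k - (n - r) - 1) := by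
                simpa using hρτ
              apply hwne
              rw [hsT', hwdec, hρτ']
            · have e1 : sub? s (topAddr s (n - r) ++ (l.length - 1) :: w.drop (n - r + 1)) =
                  sub? t (w.drop (n - r + 1)) :=
                (push_sub_old hlpos hlget hsub hsub' _).1
              have e2 : sub? s' (topAddr s (n - r) ++ l.length :: w.drop (n - r + 1)) =
                  sub? t' (w.drop (n - r + 1)) :=
                push_sub_new hsub' _
              have e3 : sizeAt s' w = sizeAt t' (w.drop (n - r + 1)) := by
                conv_lhs => rw [hwdec]
                exact sizeAt_congr e2
              rw [sizeAt_congr e1, hss.sizeAt_eq _, ← e3]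
              exact hwsz
          · rw [if_neg hmatch]
            by_cases hw : w = topAddr s (n - k)
            · left
              obtain ⟨hsT, hsT'⟩ := push_topAddr hv hv' h1 h2 h3 hlpos hlget hss hsub hsub'
                (show n - r < n - k by omega) (show n - k ≤ n by omega)
              have e1 : sub? s w = sub? t (topAddr t (n - k - (n - r) - 1)) := by
                rw [hw, hsT]
                exact (push_sub_old hlpos hlget hsub hsub' _).1
              have e2 : sub? s' w = sub? t (topAddr t (n - k - (n - r) - 1)) := by
                rw [hw, hsT]
                exact (push_sub_old hlpos hlget hsub hsub' _).2
              have hsz3 : sizeAt s' w = sizeAt s w :=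
                (sizeAt_congr e2).trans (sizeAt_congr e1).symm
              rw [hPw, topAddr_snoc hv (show n - k < n by omega), ← hw]
              have hx : x = sizeAt s w - 1 := by
                have : x + 1 = sizeAt s w := by
                  rw [← hsz3]
                  exact hwsz
                omega
              rw [hx]
            · right; right
              refine ⟨w, x, hPw, hwlen, hw, ?_⟩
              have hvw : (sub? s' w).isSome := by
                rw [hPw] at hval
                exact isSome_of_append hval
              have hwa : w ≠ topAddr s (n - r) :=
                ne_of_length_ne (by rw [hwlen, hαlen]; omega)
              have hwt : w.take (n - r + 1) ≠ topAddr s (n - r) ++ [l.length] := by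
                intro hc
                apply hmatch
                rw [hPw, List.take_append_of_le_length (by rw [hwlen]; omega), hc]
              obtain ⟨-, hsz2⟩ := push_untouched hv h3 h2 hsub hsub' w hwa hwt hvw
              rw [hsz2]
              exact hwsz

end MainStep

/-- Let `1 ≤ k ≤ n` and let `R` be a run of an `n`-DPDA that is not
`(k-1)`-upper.  Suppose the greatest index `j ∈ [0,|R|-1]` such that `R[j,|R|]` is
`k`-upper exists, and the prefix `R[0,j]` is `(k-1)`-upper.  Then `R` is a `k`-return. -/
theorem statement7 {n : ℕ} (hn : 1 ≤ n) {A Γ : Type} [Finite A] [Finite Γ]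
    {D : DPDA n A Γ} (k : ℕ) (hk1 : 1 ≤ k) (hk : k ≤ n) (R : Run D)
    (hnot : ¬ R.IsUpper (k - 1)) (j : ℕ) (hj : j < R.len)
    (hjup : (R.sub j R.len).IsUpper k)
    (hjmax : ∀ j', j < j' → j' < R.len → ¬ (R.sub j' R.len).IsUpper k)
    (hpre : (R.sub 0 j).IsUpper (k - 1)) :
    R.IsReturn k := by
  have hb : n - (k - 1) = n - k + 1 := by omega
  have hlpos : 0 < R.len := by omega
  have hvalid : ∀ i ≤ R.len, IsValid n (R.cfg i).2 := run_valid hlpos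
  have han : n - k < n := by omega
  -- transfer of upper-ness of suffix subruns
  have key : ∀ i, i ≤ R.len → ∀ k', ((R.sub i R.len).IsUpper k' ↔
      R.histTo i R.len (topAddr (R.cfg R.len).2 (n - k')) = topAddr (R.cfg i).2 (n - k')) := by
    intro i hi k'
    have hL : (R.sub i R.len).len = R.len - i := by
      show min R.len R.len - i = R.len - i
      rw [min_self]
    have hcl : (R.sub i R.len).cfg ((R.sub i R.len).len) = R.cfg R.len := by
      show R.cfg (i + (R.sub i R.len).len) = R.cfg R.len
      rw [hL]
      congr 1
      omega
    have hc0 : (R.sub i R.len).cfg 0 = R.cfg i := by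
      show R.cfg (i + 0) = R.cfg i
      rw [Nat.add_zero]
    unfold Run.IsUpper
    rw [hcl, hc0, hL, histTo_sub]
    have h1 : i + (R.len - i) = R.len := by omega
    rw [h1]
  -- transfer for the prefix subrun
  have hpre' : R.histTo 0 j (topAddr (R.cfg j).2 (n - k + 1)) =
      topAddr (R.cfg 0).2 (n - k + 1) := by
    have hL : (R.sub 0 j).len = j := by
      show min j R.len - 0 = j
      rw [min_eq_left (le_of_lt hj), Nat.sub_zero]
    have hcl : (R.sub 0 j).cfg ((R.sub 0 j).len) = R.cfg j := by
      show R.cfg (0 + (R.sub 0 j).len) = R.cfg j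
      rw [hL, Nat.zero_add]
    have hc0 : (R.sub 0 j).cfg 0 = R.cfg 0 := by
      show R.cfg (0 + 0) = R.cfg 0
      rfl
    have h0 := hpre
    unfold Run.IsUpper at h0
    rw [hcl, hc0, hL, histTo_sub, Nat.zero_add, hb] at h0
    exact h0
  have hnot' : ¬ R.histTo 0 R.len (topAddr (R.cfg R.len).2 (n - k + 1)) =
      topAddr (R.cfg 0).2 (n - k + 1) := by
    intro hc
    apply hnot
    unfold Run.IsUpper
    rw [hb]
    exact hc
  have hjup' : R.histTo j R.len (topAddr (R.cfg R.len).2 (n - k)) =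
      topAddr (R.cfg j).2 (n - k) := (key j (le_of_lt hj) k).mp hjup
  -- the traced address
  have hvE : IsValid n (R.cfg R.len).2 := hvalid _ le_rfl
  have hP0valid : (sub? (R.cfg R.len).2 (topAddr (R.cfg R.len).2 (n - k + 1))).isSome := by
    obtain ⟨u, hu, -, -⟩ := topAddr_spec (n - k + 1) n _ hvE (by omega)
    rw [hu]
    rfl
  have hP0take : (topAddr (R.cfg R.len).2 (n - k + 1)).take (n - k) =
      topAddr (R.cfg R.len).2 (n - k) := topAddr_take hvE (by omega) (by omega)
  -- the invariant, pushed down from R.len to j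
  have hInv : ∀ i, j ≤ i → i ≤ R.len →
      (R.histTo i R.len (topAddr (R.cfg R.len).2 (n - k + 1)) =
        topAddr (R.cfg i).2 (n - k + 1) ∨
      R.histTo i R.len (topAddr (R.cfg R.len).2 (n - k + 1)) =
        topAddr (R.cfg i).2 (n - k) ++
          [sizeAt (R.cfg i).2 (topAddr (R.cfg i).2 (n - k)) - 2] ∨
      (∃ w x, R.histTo i R.len (topAddr (R.cfg R.len).2 (n - k + 1)) = w ++ [x] ∧
        w.length = n - k ∧ w ≠ topAddr (R.cfg i).2 (n - k) ∧
        x + 1 = sizeAt (R.cfg i).2 w)) := by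
    refine down_ind _ j R.len ?_ ?_
    · left
      rw [histTo_of_le le_rfl]
    · intro i h1 h2 hP
      have hvalstep : (sub? (R.cfg (i+1)).2
          (R.histTo (i+1) R.len (topAddr (R.cfg R.len).2 (n - k + 1)))).isSome :=
        histTo_valid (by omega) le_rfl _ hP0valid
      have hstep : R.histTo i R.len (topAddr (R.cfg R.len).2 (n - k + 1)) =
          R.stepHist i (R.histTo (i+1) R.len (topAddr (R.cfg R.len).2 (n - k + 1))) :=
        histTo_step h2 _
      have hcase : R.histTo (i+1) R.len (topAddr (R.cfg R.len).2 (n - k + 1)) =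
            topAddr (R.cfg (i+1)).2 (n - k + 1) ∨
          (∃ w x, R.histTo (i+1) R.len (topAddr (R.cfg R.len).2 (n - k + 1)) = w ++ [x] ∧
            w.length = n - k ∧ w ≠ topAddr (R.cfg (i+1)).2 (n - k) ∧
            x + 1 = sizeAt (R.cfg (i+1)).2 w) := by
        by_cases hil : i + 1 = R.len
        · left
          rw [hil, histTo_of_le le_rfl]
        · have hil' : i + 1 < R.len := by omega
          rcases hP with hC1 | hC2 | hC3
          · exact Or.inl hC1
          · exfalso
            have htk : R.histTo (i+1) R.len (topAddr (R.cfg R.len).2 (n - k)) =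
                topAddr (R.cfg (i+1)).2 (n - k) := by
              rw [← hP0take, ← histTo_take le_rfl, hC2,
                List.take_left' (topAddr_length (hvalid (i+1) (by omega)) (by omega))]
            exact hjmax (i+1) (by omega) hil' ((key (i+1) (by omega) k).mpr htk)
          · exact Or.inr hC3
      rw [hstep]
      exact stepHist_main hk1 hk (by omega) hvalstep hcase
  have hPredj := hInv j le_rfl (le_of_lt hj)
  -- eliminate the C3 case at j
  have hC3false : ¬ (∃ w x, R.histTo j R.len (topAddr (R.cfg R.len).2 (n - k + 1)) = w ++ [x] ∧
      w.length = n - k ∧ w ≠ topAddr (R.cfg j).2 (n - k) ∧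
      x + 1 = sizeAt (R.cfg j).2 w) := by
    rintro ⟨w, x, hPw, hwlen, hwne, -⟩
    apply hwne
    rw [← hjup', ← hP0take, ← histTo_take le_rfl, hPw, List.take_left' hwlen]
  -- eliminate the C1 case at j
  have hC1false : ¬ (R.histTo j R.len (topAddr (R.cfg R.len).2 (n - k + 1)) =
      topAddr (R.cfg j).2 (n - k + 1)) := by
    intro hc
    apply hnot'
    rw [histTo_comp (Nat.zero_le j) (le_of_lt hj), hc, hpre']
  have hC2 : R.histTo j R.len (topAddr (R.cfg R.len).2 (n - k + 1)) =
      topAddr (R.cfg j).2 (n - k) ++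
        [sizeAt (R.cfg j).2 (topAddr (R.cfg j).2 (n - k)) - 2] := by
    rcases hPredj with h | h | h
    · exact absurd h hC1false
    · exact h
    · exact absurd h hC3false
  have hvj : IsValid n (R.cfg j).2 := hvalid j (le_of_lt hj)
  have hszj1 : 1 ≤ sizeAt (R.cfg j).2 (topAddr (R.cfg j).2 (n - k)) := sizeAt_top_pos hvj han
  have hsnocj : topAddr (R.cfg j).2 (n - k + 1) = topAddr (R.cfg j).2 (n - k) ++
      [sizeAt (R.cfg j).2 (topAddr (R.cfg j).2 (n - k)) - 1] := topAddr_snoc hvj han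
  -- the size at j is at least 2
  have hszj2 : 2 ≤ sizeAt (R.cfg j).2 (topAddr (R.cfg j).2 (n - k)) := by
    by_contra hc
    apply hC1false
    rw [hC2, hsnocj]
    congr 2
    omega
  -- validity of the two addresses at j
  obtain ⟨uj, huj, hvuj, -⟩ := topAddr_spec (n - k) n _ hvj (by omega)
  have hlstj : ∃ lstj, sub? (R.cfg j).2 (topAddr (R.cfg j).2 (n - k)) = some (St.node lstj) ∧
      lstj.length = sizeAt (R.cfg j).2 (topAddr (R.cfg j).2 (n - k)) := by
    match hq : n - (n - k), uj, hvuj with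
    | 0, _, hvuj => omega
    | q + 1, St.leaf γ, hvuj => exact absurd hvuj (by simp [IsValid])
    | q + 1, St.node lu, hvuj => exact ⟨lu, huj, (sizeAt_of_sub huj).symm⟩
  obtain ⟨lstj, hlj, hlj2⟩ := hlstj
  have hval1 : (sub? (R.cfg j).2 (topAddr (R.cfg j).2 (n - k) ++
      [sizeAt (R.cfg j).2 (topAddr (R.cfg j).2 (n - k)) - 2])).isSome :=
    valid_last_of hlj (by omega)
  have hval2 : (sub? (R.cfg j).2 (topAddr (R.cfg j).2 (n - k) ++
      [sizeAt (R.cfg j).2 (topAddr (R.cfg j).2 (n - k)) - 1])).isSome :=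
    valid_last_of hlj (by omega)
  -- monotonicity over the prefix [0, j]
  obtain ⟨v, y, y', e1, e2, hyy, hgap⟩ := histTo_mono (Nat.zero_le j) (le_of_lt hj)
    (topAddr (R.cfg j).2 (n - k))
    (sizeAt (R.cfg j).2 (topAddr (R.cfg j).2 (n - k)) - 2)
    (sizeAt (R.cfg j).2 (topAddr (R.cfg j).2 (n - k)) - 1)
    (by omega) hval1 hval2
  have hv0 : IsValid n (R.cfg 0).2 := hvalid 0 (Nat.zero_le _)
  have hsz01 : 1 ≤ sizeAt (R.cfg 0).2 (topAddr (R.cfg 0).2 (n - k)) := sizeAt_top_pos hv0 han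
  have hsnoc0 : topAddr (R.cfg 0).2 (n - k + 1) = topAddr (R.cfg 0).2 (n - k) ++
      [sizeAt (R.cfg 0).2 (topAddr (R.cfg 0).2 (n - k)) - 1] := topAddr_snoc hv0 han
  -- identify v and y'
  have he2' : v ++ [y'] = topAddr (R.cfg 0).2 (n - k) ++
      [sizeAt (R.cfg 0).2 (topAddr (R.cfg 0).2 (n - k)) - 1] := by
    rw [← e2, ← hsnoc0, ← hsnocj]
    exact hpre'
  have hvlen : v.length = n - k := by
    have := congrArg List.length e2.symm
    rw [histTo_length (le_of_lt hj)] at this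
    simp [topAddr_length hvj (show n - k ≤ n by omega)] at this
    omega
  have hvv : v = topAddr (R.cfg 0).2 (n - k) ∧
      y' = sizeAt (R.cfg 0).2 (topAddr (R.cfg 0).2 (n - k)) - 1 := by
    have := List.append_inj he2' (by rw [hvlen, topAddr_length hv0 (by omega)])
    exact ⟨this.1, by simpa using this.2⟩
  obtain ⟨rfl, rfl⟩ := hvv
  -- the composed value
  have hfinal : R.histTo 0 R.len (topAddr (R.cfg R.len).2 (n - k + 1)) =
      topAddr (R.cfg 0).2 (n - k) ++ [y] := by
    rw [histTo_comp (Nat.zero_le j) (le_of_lt hj), hC2, e1]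
  -- y is not the top
  have hyne : y ≠ sizeAt (R.cfg 0).2 (topAddr (R.cfg 0).2 (n - k)) - 1 := by
    intro hc
    apply hnot'
    rw [hfinal, hc, hsnoc0]
  have hy : y = sizeAt (R.cfg 0).2 (topAddr (R.cfg 0).2 (n - k)) - 2 := by omega
  constructor
  · rw [hb, hfinal, hy]
  · -- no suffix is (k-1)-upper
    intro i hi hup
    have hup2 : R.histTo i R.len (topAddr (R.cfg R.len).2 (n - k + 1)) =
        topAddr (R.cfg i).2 (n - k + 1) := by
      have h0 := (key i (le_of_lt hi) (k - 1)).mp hup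
      rw [hb] at h0
      exact h0
    rcases Nat.lt_trichotomy i j with hij | rfl | hij
    · -- i < j
      obtain ⟨v2, z, z', f1, f2, hzz, hgap2⟩ := histTo_mono (le_of_lt hij) (le_of_lt hj)
        (topAddr (R.cfg j).2 (n - k))
        (sizeAt (R.cfg j).2 (topAddr (R.cfg j).2 (n - k)) - 2)
        (sizeAt (R.cfg j).2 (topAddr (R.cfg j).2 (n - k)) - 1)
        (by omega) hval1 hval2
      have hvi : IsValid n (R.cfg i).2 := hvalid i (by omega)
      have hszi1 : 1 ≤ sizeAt (R.cfg i).2 (topAddr (R.cfg i).2 (n - k)) :=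
        sizeAt_top_pos hvi han
      have hsnoci : topAddr (R.cfg i).2 (n - k + 1) = topAddr (R.cfg i).2 (n - k) ++
          [sizeAt (R.cfg i).2 (topAddr (R.cfg i).2 (n - k)) - 1] := topAddr_snoc hvi han
      -- identify v2 ++ [z] with the top at i
      have hf1' : v2 ++ [z] = topAddr (R.cfg i).2 (n - k) ++
          [sizeAt (R.cfg i).2 (topAddr (R.cfg i).2 (n - k)) - 1] := by
        rw [← f1, ← hsnoci, ← hC2, ← hup2]
        rw [histTo_comp (le_of_lt hij) (le_of_lt hj)]
      have hv2len : v2.length = n - k := by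
        have := congrArg List.length f1.symm
        rw [histTo_length (le_of_lt hj)] at this
        simp [topAddr_length hvj (show n - k ≤ n by omega)] at this
        omega
      have hvv2 : v2 = topAddr (R.cfg i).2 (n - k) ∧
          z = sizeAt (R.cfg i).2 (topAddr (R.cfg i).2 (n - k)) - 1 := by
        have := List.append_inj hf1' (by rw [hv2len, topAddr_length hvi (by omega)])
        exact ⟨this.1, by simpa using this.2⟩
      obtain ⟨rfl, rfl⟩ := hvv2
      -- bound z' from validity
      have hz'valid : (sub? (R.cfg i).2 (topAddr (R.cfg i).2 (n - k) ++ [z'])).isSome := by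
        rw [← f2]
        exact histTo_valid (by omega) (le_of_lt hj) _ hval2
      obtain ⟨lz, hlz1, hlz2⟩ := valid_last hz'valid
      have hlzsz : lz.length = sizeAt (R.cfg i).2 (topAddr (R.cfg i).2 (n - k)) :=
        (sizeAt_of_sub hlz1).symm
      have hz' : z' = sizeAt (R.cfg i).2 (topAddr (R.cfg i).2 (n - k)) - 1 := by omega
      -- R[i,j] is (k-1)-upper
      have hiup : R.histTo i j (topAddr (R.cfg j).2 (n - k + 1)) =
          topAddr (R.cfg i).2 (n - k + 1) := by
        rw [hsnocj, f2, hz', hsnoci]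
      -- R[0,i] is (k-1)-upper
      have h0iup : R.histTo 0 i (topAddr (R.cfg i).2 (n - k + 1)) =
          topAddr (R.cfg 0).2 (n - k + 1) := by
        rw [← hiup, ← histTo_comp (Nat.zero_le i) (le_of_lt hij)]
        exact hpre'
      apply hnot'
      rw [histTo_comp (Nat.zero_le i) (le_of_lt hi), hup2, h0iup]
    · -- i = j
      rw [hup2, hsnocj] at hC2
      have := List.append_inj hC2 rfl
      have h2 := this.2
      simp at h2
      omega
    · -- j < i
      have htk : R.histTo i R.len (topAddr (R.cfg R.len).2 (n - k)) =
          topAddr (R.cfg i).2 (n - k) := by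
        rw [← hP0take, ← histTo_take le_rfl, hup2,
          topAddr_take (hvalid i (le_of_lt hi)) (by omega) (by omega)]
      exact hjmax i hij hi ((key i (le_of_lt hi) k).mpr htk)

end HOPDA
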